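/- arXiv:2311.12017 — 3 statements merged into one kernel-verified Lean document; each statement's English description precedes it below -/
import Mathlib

section
/- Fix integers n ≥ 1 and 1 ≤ m₀ ≤ n. For each m₀ ≤ m ≤ n let F_m : {0,1}^m → {0,1}^m be a pairwise independent random function, with F_{m₀},…,F_n mutually independent, and define the random map r := r^{m₀} by the downward recursion r^{n+1} = id and r^m(x) = r^{m+1}(F_m(MSB_m(x)) ‖ LSB_{n−m}(x)). Additionally let k be a uniformly random key for a 4-wise independent family {h_k : {0,1}^n → {0,1}}, independent of (F_{m₀},…,F_n), and set s(x) := h_k(r(x)). Let X ⊆ {1,…,n} with 1 ≤ |X| = m ≤ n/2, and let T be the random 2^m × 2^{n−m} matrix with entries T_{ij} = (−1)^{s(i‖_X j)} for i ∈ {0,1}^X, j ∈ {0,1}^{X^c}. Then E[‖T·Tᵀ‖_F²] ≤ 5n·2^{2n−m}. -/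
open scoped BigOperators Classical
open Matrix

/-- Probability of an event under a (finite, weighted) probability mass function. -/
noncomputable def pr {Ω : Type*} [Fintype Ω] (p : Ω → ℝ) (E : Ω → Prop) : ℝ :=
  ∑ ω, if E ω then p ω else 0

/-- Squared Frobenius (Hilbert–Schmidt) norm of a real matrix. -/
def frobSq {a b : Type*} [Fintype a] [Fintype b] (M : Matrix a b ℝ) : ℝ :=
  ∑ i, ∑ j, M i j ^ 2

/-- The `m` most significant bits of an `n`-bit string (index `0` is most significant). -/
def msb {n : ℕ} (m : ℕ) (h : m ≤ n) (x : Fin n → Bool) : Fin m → Bool :=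
  fun s => x ⟨s.1, lt_of_lt_of_le s.2 h⟩

/-- Replace the `m` most significant bits of `x` by `f m` applied to them,
keeping the `n - m` least significant bits: this is `f_m(MSB_m(x)) ‖ LSB_{n-m}(x)`. -/
def rStep (n : ℕ) (f : ∀ m : ℕ, (Fin m → Bool) → (Fin m → Bool)) (m : ℕ) (h : m ≤ n)
    (x : Fin n → Bool) : Fin n → Bool :=
  fun t => if ht : (t : ℕ) < m then f m (msb m h x) ⟨t.1, ht⟩ else x t

/-- The downward recursion `r^{n+1} = id`, `r^m(x) = r^{m+1}(f_m(MSB_m(x)) ‖ LSB_{n-m}(x))`. -/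
def rRec (n : ℕ) (f : ∀ m : ℕ, (Fin m → Bool) → (Fin m → Bool)) (m : ℕ)
    (x : Fin n → Bool) : Fin n → Bool :=
  if h : m ≤ n then rRec n f (m + 1) (rStep n f m h x) else x
termination_by n + 1 - m
decreasing_by omega

/-- `i ‖_X j`: the `n`-bit string agreeing with `i` on the coordinates in `X`
and with `j` on the complementary coordinates. -/
def mergeCut {n : ℕ} (X : Finset (Fin n)) (i : {t : Fin n // t ∈ X} → Bool)
    (j : {t : Fin n // t ∉ X} → Bool) : Fin n → Bool :=
  fun t => if h : t ∈ X then i ⟨t, h⟩ else j ⟨t, h⟩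
/-- Real-valued indicator of a proposition. -/
noncomputable def ind (P : Prop) : ℝ := if P then 1 else 0

lemma ind_of {P : Prop} (h : P) : ind P = 1 := if_pos h
lemma ind_of_not {P : Prop} (h : ¬ P) : ind P = 0 := if_neg h
lemma ind_nonneg (P : Prop) : 0 ≤ ind P := by unfold ind; split <;> norm_num
lemma ind_le_one (P : Prop) : ind P ≤ 1 := by unfold ind; split <;> norm_num
lemma ind_congr {P Q : Prop} (h : P ↔ Q) : ind P = ind Q := by
  unfold ind; by_cases hP : P
  · rw [if_pos hP, if_pos (h.mp hP)]
  · rw [if_neg hP, if_neg (fun hQ => hP (h.mpr hQ))]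

section Aux
variable {Ω : Type*} [Fintype Ω] (p : Ω → ℝ)

lemma pr_nonneg (hp0 : ∀ ω, 0 ≤ p ω) (E : Ω → Prop) : 0 ≤ pr p E := by
  unfold pr; apply Finset.sum_nonneg; intro ω _; split <;> simp [hp0 ω]

lemma pr_congr {E E' : Ω → Prop} (h : ∀ ω, E ω ↔ E' ω) : pr p E = pr p E' := by
  unfold pr; exact Finset.sum_congr rfl (fun ω _ => by rw [h ω])

lemma pr_mono (hp0 : ∀ ω, 0 ≤ p ω) {E E' : Ω → Prop} (h : ∀ ω, E ω → E' ω) :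
    pr p E ≤ pr p E' := by
  unfold pr; apply Finset.sum_le_sum; intro ω _
  by_cases hE : E ω
  · simp [hE, h ω hE]
  · simp [hE]; split <;> simp [hp0 ω]

lemma pr_le_one (hp0 : ∀ ω, 0 ≤ p ω) (hp1 : ∑ ω, p ω = 1) (E : Ω → Prop) :
    pr p E ≤ 1 := by
  rw [← hp1]; unfold pr
  apply Finset.sum_le_sum; intro ω _; split <;> simp [hp0 ω]

lemma pr_true (hp1 : ∑ ω, p ω = 1) : pr p (fun _ => True) = 1 := by
  unfold pr; simpa using hp1

/-- Fiber decomposition of an expectation through a finite-valued statistic. -/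
lemma sum_fiber {V : Type*} [Fintype V] (φ : Ω → V) (f : V → ℝ) :
    ∑ ω, p ω * f (φ ω) = ∑ v, pr p (fun ω => φ ω = v) * f v := by
  unfold pr
  simp only [Finset.sum_mul, ite_mul, zero_mul]
  rw [Finset.sum_comm]
  apply Finset.sum_congr rfl; intro ω _
  rw [Finset.sum_congr rfl (fun v _ => ?_), Finset.sum_ite_eq' Finset.univ (φ ω) (fun v => p ω * f v)]
  · simp
  · rcases eq_or_ne v (φ ω) with h|h <;> simp [h, eq_comm]

lemma sum_fiber2 {V W : Type*} [Fintype V] [Fintype W] (φ : Ω → V) (ψ : Ω → W)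
    (f : V → W → ℝ) :
    ∑ ω, p ω * f (φ ω) (ψ ω)
      = ∑ v, ∑ w, pr p (fun ω => φ ω = v ∧ ψ ω = w) * f v w := by
  have := sum_fiber p (fun ω => (φ ω, ψ ω)) (fun q => f q.1 q.2)
  rw [this, ← Finset.sum_product']
  apply Finset.sum_congr rfl; intro q _
  exact congrArg (· * f q.1 q.2) (pr_congr p (fun ω => by simp [Prod.ext_iff]))

lemma pr_exists_le (hp0 : ∀ ω, 0 ≤ p ω) {ι : Type*} (s : Finset ι) (A : ι → Ω → Prop) :
    pr p (fun ω => ∃ k ∈ s, A k ω) ≤ ∑ k ∈ s, pr p (A k) := by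
  unfold pr
  rw [Finset.sum_comm]
  apply Finset.sum_le_sum; intro ω _
  by_cases hE : ∃ k ∈ s, A k ω
  · obtain ⟨k₀, hk₀, hA⟩ := hE
    rw [if_pos ⟨k₀, hk₀, hA⟩]
    calc p ω = (if A k₀ ω then p ω else 0) := by rw [if_pos hA]
    _ ≤ ∑ k ∈ s, (if A k ω then p ω else 0) :=
        Finset.single_le_sum (f := fun k => if A k ω then p ω else 0)
          (fun k _ => by split <;> simp [hp0 ω]) hk₀
  · rw [if_neg hE]
    apply Finset.sum_nonneg; intro k _; split <;> simp [hp0 ω]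

end Aux
/-- Sign `(-1)^b`. -/
noncomputable def sgn (b : Bool) : ℝ := if b then -1 else 1

lemma sgn_mul_self (b : Bool) : sgn b * sgn b = 1 := by
  unfold sgn; split <;> norm_num

lemma sgn_abs_le (b : Bool) : sgn b ≤ 1 ∧ -1 ≤ sgn b := by
  unfold sgn; split <;> norm_num

/-- Forward chain: `chainK n f m₀ k` applies rounds `m₀, …, m₀+k-1` (those that are `≤ n`). -/
def chainK (n : ℕ) (f : ∀ m : ℕ, (Fin m → Bool) → (Fin m → Bool)) (m₀ : ℕ) :
    ℕ → (Fin n → Bool) → (Fin n → Bool)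
  | 0 => fun x => x
  | (k+1) => fun x =>
      if h : m₀ + k ≤ n then rStep n f (m₀ + k) h (chainK n f m₀ k x)
      else chainK n f m₀ k x

lemma rRec_unfold (n : ℕ) (f : ∀ m : ℕ, (Fin m → Bool) → (Fin m → Bool)) (m : ℕ)
    (x : Fin n → Bool) :
    rRec n f m x = if h : m ≤ n then rRec n f (m + 1) (rStep n f m h x) else x := by
  rw [rRec]

lemma rRec_eq_chainK (n : ℕ) (f : ∀ m : ℕ, (Fin m → Bool) → (Fin m → Bool)) (m₀ : ℕ)
    (hm : m₀ ≤ n + 1) (x : Fin n → Bool) :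
    rRec n f m₀ x = chainK n f m₀ (n + 1 - m₀) x := by
  have key : ∀ k, m₀ + k ≤ n + 1 →
      rRec n f m₀ x = rRec n f (m₀ + k) (chainK n f m₀ k x) := by
    intro k
    induction k with
    | zero => intro _; simp [chainK]
    | succ k ih =>
      intro hk
      have hk' : m₀ + k ≤ n := by omega
      rw [ih (by omega)]
      rw [rRec_unfold n f (m₀ + k)]
      rw [dif_pos hk']
      have : chainK n f m₀ (k+1) x = rStep n f (m₀ + k) hk' (chainK n f m₀ k x) := by
        simp [chainK, dif_pos hk']
      rw [this]
      congr 1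
  have h2 := key (n + 1 - m₀) (by omega)
  rw [h2, rRec_unfold]
  rw [dif_neg (by omega)]

lemma chainK_congr (n : ℕ) (f g : ∀ m : ℕ, (Fin m → Bool) → (Fin m → Bool)) (m₀ : ℕ)
    (k : ℕ) (hfg : ∀ m, m₀ ≤ m → m < m₀ + k → m ≤ n → f m = g m) (x : Fin n → Bool) :
    chainK n f m₀ k x = chainK n g m₀ k x := by
  induction k with
  | zero => simp [chainK]
  | succ k ih =>
    have ih' := ih (fun m h1 h2 h3 => hfg m h1 (by omega) h3)
    simp only [chainK]
    split
    · next h =>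
      rw [ih']
      unfold rStep
      funext t
      split
      · rw [hfg (m₀ + k) (by omega) (by omega) h]
      · rfl
    · exact ih'

lemma chainK_high (n : ℕ) (f : ∀ m : ℕ, (Fin m → Bool) → (Fin m → Bool)) (m₀ k : ℕ)
    (x : Fin n → Bool) (t : Fin n) (ht : m₀ + k ≤ (t : ℕ) + 1) :
    chainK n f m₀ k x t = x t := by
  induction k with
  | zero => simp [chainK]
  | succ k ih =>
    simp only [chainK]
    have h' := ih (by omega)
    split
    · unfold rStep
      rw [dif_neg (by omega)]
      exact h'
    · exact h'

lemma rStep_collision {n : ℕ} {f : ∀ m : ℕ, (Fin m → Bool) → (Fin m → Bool)} {m : ℕ}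
    (h : m ≤ n) {x y : Fin n → Bool} (hne : x ≠ y)
    (heq : rStep n f m h x = rStep n f m h y) :
    msb m h x ≠ msb m h y ∧ f m (msb m h x) = f m (msb m h y) ∧
      ∀ t : Fin n, m ≤ (t : ℕ) → x t = y t := by
  have hlow : ∀ t : Fin n, m ≤ (t : ℕ) → x t = y t := by
    intro t ht
    have := congrFun heq t
    unfold rStep at this
    rwa [dif_neg (by omega), dif_neg (by omega)] at this
  have hmsb : msb m h x ≠ msb m h y := by
    intro hmm
    apply hne
    funext t
    by_cases ht : (t : ℕ) < m
    · have := congrFun hmm ⟨t.1, ht⟩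
      unfold msb at this
      simpa using this
    · exact hlow t (by omega)
  refine ⟨hmsb, ?_, hlow⟩
  funext s
  have hsn : (s : ℕ) < n := lt_of_lt_of_le s.2 h
  have := congrFun heq ⟨s.1, hsn⟩
  unfold rStep at this
  rw [dif_pos (by simpa using s.2), dif_pos (by simpa using s.2)] at this
  simpa using this

lemma first_change {g : ℕ → Prop} (h0 : ¬ g 0) {K : ℕ} (hK : g K) :
    ∃ k, k < K ∧ ¬ g k ∧ g (k + 1) := by
  induction K with
  | zero => exact absurd hK h0
  | succ K ih =>
    by_cases hgK : g K
    · obtain ⟨k, hk, h1, h2⟩ := ih hgK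
      exact ⟨k, by omega, h1, h2⟩
    · exact ⟨K, by omega, hgK, hK⟩
lemma prod_split_at {ι : Type*} [Fintype ι] [DecidableEq ι] (α : ι → Type*)
    [∀ i, Fintype (α i)] (μ : ∀ i, α i → ℝ) (i₀ : ι)
    (q : α i₀ × ∀ j : {j // j ≠ i₀}, α j) :
    ∏ i, μ i ((Equiv.piSplitAt i₀ α).symm q i)
      = μ i₀ q.1 * ∏ j : {j // j ≠ i₀}, μ j.1 (q.2 j) := by
  rw [Finset.prod_eq_prod_diff_singleton_mul (Finset.mem_univ i₀)
    (fun i => μ i ((Equiv.piSplitAt i₀ α).symm q i))]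
  rw [mul_comm]
  congr 1
  · simp
  · rw [Finset.prod_subtype (p := fun j => j ≠ i₀) (Finset.univ \ {i₀}) (by simp) 
      (fun i => μ i ((Equiv.piSplitAt i₀ α).symm q i))]
    apply Finset.prod_congr rfl
    intro j _
    congr 1
    simp [j.2]

lemma pi_split {ι : Type*} [Fintype ι] [DecidableEq ι] (α : ι → Type*)
    [∀ i, Fintype (α i)] (μ : ∀ i, α i → ℝ) (i₀ : ι) (htot : ∑ a, μ i₀ a = 1)
    (P : (∀ i, α i) → Prop)
    (hP : ∀ (c : ∀ i, α i) (a : α i₀), P (Function.update c i₀ a) ↔ P c)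
    (S : α i₀ → Prop) :
    ∑ c : ∀ i, α i, (∏ i, μ i (c i)) * ind (P c ∧ S (c i₀))
      = (∑ a : α i₀, μ i₀ a * ind (S a))
        * ∑ c : ∀ i, α i, (∏ i, μ i (c i)) * ind (P c) := by
  classical
  set e := Equiv.piSplitAt i₀ α with he
  have hupd : ∀ (a b : α i₀) (c' : ∀ j : {j // j ≠ i₀}, α j),
      e.symm (a, c') = Function.update (e.symm (b, c')) i₀ a := by
    intro a b c'
    funext j
    by_cases hj : j = i₀
    · subst hj; simp [he]
    · simp [he, Function.update_of_ne hj, hj]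
  have hPiff : ∀ (a b : α i₀) (c' : ∀ j : {j // j ≠ i₀}, α j),
      P (e.symm (a, c')) ↔ P (e.symm (b, c')) := by
    intro a b c'
    rw [hupd a b c', hP]
  have expand : ∀ (G : (∀ i, α i) → ℝ),
      ∑ c : ∀ i, α i, G c = ∑ a : α i₀, ∑ c' : ∀ j : {j // j ≠ i₀}, α j, G (e.symm (a, c')) := by
    intro G
    rw [← Equiv.sum_comp e.symm G, Fintype.sum_prod_type]
  rw [expand, expand]
  have hsymm_at : ∀ (a : α i₀) (c' : ∀ j : {j // j ≠ i₀}, α j), e.symm (a, c') i₀ = a := by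
    intro a c'; simp [he]
  -- rewrite summands
  calc ∑ a : α i₀, ∑ c' : ∀ j : {j // j ≠ i₀}, α j,
        (∏ i, μ i (e.symm (a, c') i)) * ind (P (e.symm (a, c')) ∧ S (e.symm (a, c') i₀))
      = ∑ a : α i₀, ∑ c' : ∀ j : {j // j ≠ i₀}, α j,
        (μ i₀ a * ind (S a)) *
          ((∏ j : {j // j ≠ i₀}, μ j.1 (c' j)) * ind (∀ b, P (e.symm (b, c')))) := by
        apply Finset.sum_congr rfl; intro a _
        apply Finset.sum_congr rfl; intro c' _
        rw [prod_split_at, hsymm_at]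
        have : (P (e.symm (a, c')) ∧ S a) ↔ ((∀ b, P (e.symm (b, c'))) ∧ S a) := by
          constructor
          · rintro ⟨h1, h2⟩; exact ⟨fun b => (hPiff a b c').mp h1, h2⟩
          · rintro ⟨h1, h2⟩; exact ⟨h1 a, h2⟩
        rw [ind_congr this]
        by_cases h1 : (∀ b, P (e.symm (b, c'))) <;> by_cases h2 : S a <;>
          simp [h1, h2, ind] <;> ring
    _ = (∑ a : α i₀, μ i₀ a * ind (S a)) *
        (∑ c' : ∀ j : {j // j ≠ i₀}, α j,
          (∏ j : {j // j ≠ i₀}, μ j.1 (c' j)) * ind (∀ b, P (e.symm (b, c')))) := by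
        rw [Finset.sum_mul_sum]
    _ = (∑ a : α i₀, μ i₀ a * ind (S a)) *
        ∑ a : α i₀, ∑ c' : ∀ j : {j // j ≠ i₀}, α j,
          (∏ i, μ i (e.symm (a, c') i)) * ind (P (e.symm (a, c'))) := by
        congr 1
        have : ∀ (a : α i₀) (c' : ∀ j : {j // j ≠ i₀}, α j),
            (∏ i, μ i (e.symm (a, c') i)) * ind (P (e.symm (a, c')))
            = μ i₀ a * ((∏ j : {j // j ≠ i₀}, μ j.1 (c' j)) *
                ind (∀ b, P (e.symm (b, c')))) := by
          intro a c'
          rw [prod_split_at]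
          have : P (e.symm (a, c')) ↔ (∀ b, P (e.symm (b, c'))) := by
            constructor
            · intro h1 b; exact (hPiff a b c').mp h1
            · intro h1; exact h1 a
          rw [ind_congr this]; ring
        rw [Finset.sum_congr rfl (fun a _ => Finset.sum_congr rfl (fun c' _ => this a c'))]
        rw [← Finset.sum_mul_sum, htot, one_mul]
lemma count_agree_inner {σ : Type*} [Fintype σ] [DecidableEq σ] (s : Finset σ) (i : σ → Bool) :
    ∑ i' : σ → Bool, ind (∀ t ∈ s, i' t = i t)
      = 2 ^ (Fintype.card σ - s.card) := by
  have key : ∀ i' : σ → Bool,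
      ind (∀ t ∈ s, i' t = i t)
        = ∏ t : σ, (if t ∈ s then (if i' t = i t then (1:ℝ) else 0) else 1) := by
    intro i'
    by_cases h : ∀ t ∈ s, i' t = i t
    · rw [ind_of h, Finset.prod_eq_one]
      intro t _
      by_cases ht : t ∈ s <;> simp [ht, h t]
    · push_neg at h
      obtain ⟨t, hts, hti⟩ := h
      rw [ind_of_not (by push_neg; exact ⟨t, hts, hti⟩)]
      rw [eq_comm]
      apply Finset.prod_eq_zero (Finset.mem_univ t)
      simp [hts, hti]
  simp only [key]
  rw [Finset.sum_congr rfl (fun i' _ => rfl)]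
  have := Finset.prod_univ_sum (fun _ : σ => (Finset.univ : Finset Bool))
    (fun t b => if t ∈ s then (if b = i t then (1:ℝ) else 0) else 1)
  rw [Fintype.piFinset_univ] at this
  rw [← this]
  have : ∀ t : σ, (∑ b : Bool, if t ∈ s then (if b = i t then (1:ℝ) else 0) else 1)
      = if t ∈ s then 1 else 2 := by
    intro t
    by_cases ht : t ∈ s <;> simp [ht]
  rw [Finset.prod_congr rfl (fun t _ => this t)]
  rw [Finset.prod_ite]
  simp only [Finset.prod_const_one, one_mul, Finset.prod_const]
  congr 1
  have : Finset.univ.filter (fun t => t ∉ s) = sᶜ := by ext t; simp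
  rw [this, Finset.card_compl]

lemma sign_sum_zero {Ω : Type*} [Fintype Ω] (p : Ω → ℝ) {n : ℕ}
    (Hf : Ω → (Fin n → Bool) → Bool)
    (hH4 : ∀ (s : Finset (Fin n → Bool)) (b : (Fin n → Bool) → Bool), s.card ≤ 4 →
      pr p (fun ω => ∀ u ∈ s, Hf ω u = b u) = ((1 : ℝ) / 2) ^ s.card)
    (s : Finset (Fin n → Bool)) (hne : s.Nonempty) (hcard : s.card ≤ 4) :
    ∑ ω, p ω * ∏ u ∈ s, sgn (Hf ω u) = 0 := by
  classical
  have hprod : ∀ ω, ∏ u ∈ s, sgn (Hf ω u) = ∏ u : {u // u ∈ s}, sgn (Hf ω u.1) := by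
    intro ω; rw [← Finset.prod_coe_sort s (fun u => sgn (Hf ω u))]
  simp only [hprod]
  rw [sum_fiber p (fun ω => (fun u : {u // u ∈ s} => Hf ω u.1))
    (fun b => ∏ u : {u // u ∈ s}, sgn (b u))]
  have hpr : ∀ b : {u // u ∈ s} → Bool,
      pr p (fun ω => (fun u : {u // u ∈ s} => Hf ω u.1) = b) = ((1 : ℝ) / 2) ^ s.card := by
    intro b
    rw [pr_congr p (E' := fun ω => ∀ u ∈ s, Hf ω u =
        (fun u => if h : u ∈ s then b ⟨u, h⟩ else false) u)]
    · exact hH4 s _ hcard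
    · intro ω
      constructor
      · intro h u hu
        show Hf ω u = if h : u ∈ s then b ⟨u, h⟩ else false
        rw [dif_pos hu]
        exact congrFun h ⟨u, hu⟩
      · intro h
        funext u
        have h2 := h u.1 u.2
        have h3 : (if h : u.1 ∈ s then b ⟨u.1, h⟩ else false) = b u := by
          rw [dif_pos u.2]
        exact h2.trans h3
  simp only [hpr]
  rw [← Finset.mul_sum]
  have : ∑ b : {u // u ∈ s} → Bool, ∏ u : {u // u ∈ s}, sgn (b u) = 0 := by
    have := Finset.prod_univ_sum (fun _ : {u // u ∈ s} => (Finset.univ : Finset Bool))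
      (fun _ b => sgn b)
    rw [Fintype.piFinset_univ] at this
    rw [← this]
    obtain ⟨u, hu⟩ := hne
    apply Finset.prod_eq_zero (Finset.mem_univ (⟨u, hu⟩ : {u // u ∈ s}))
    simp [sgn]
  rw [this, mul_zero]

lemma four_sign {Ω : Type*} [Fintype Ω] (p : Ω → ℝ) {n : ℕ}
    (Hf : Ω → (Fin n → Bool) → Bool)
    (hH4 : ∀ (s : Finset (Fin n → Bool)) (b : (Fin n → Bool) → Bool), s.card ≤ 4 →
      pr p (fun ω => ∀ u ∈ s, Hf ω u = b u) = ((1 : ℝ) / 2) ^ s.card)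
    (w₁ w₂ w₃ w₄ : Fin n → Bool) (h12 : w₁ ≠ w₂) (h13 : w₁ ≠ w₃) (h14 : w₁ ≠ w₄) :
    ∑ ω, p ω * (sgn (Hf ω w₁) * sgn (Hf ω w₂) * sgn (Hf ω w₃) * sgn (Hf ω w₄)) = 0 := by
  classical
  by_cases h23 : w₂ = w₃
  · subst h23
    have : ∀ ω, sgn (Hf ω w₁) * sgn (Hf ω w₂) * sgn (Hf ω w₂) * sgn (Hf ω w₄)
        = ∏ u ∈ ({w₁, w₄} : Finset (Fin n → Bool)), sgn (Hf ω u) := by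
      intro ω
      rw [Finset.prod_pair h14]
      have := sgn_mul_self (Hf ω w₂)
      linear_combination (sgn (Hf ω w₁) * sgn (Hf ω w₄)) * this
    simp only [this]
    exact sign_sum_zero p Hf hH4 _ (Finset.insert_nonempty _ _)
      (le_trans (Finset.card_insert_le _ _) (by simp))
  by_cases h24 : w₂ = w₄
  · subst h24
    have : ∀ ω, sgn (Hf ω w₁) * sgn (Hf ω w₂) * sgn (Hf ω w₃) * sgn (Hf ω w₂)
        = ∏ u ∈ ({w₁, w₃} : Finset (Fin n → Bool)), sgn (Hf ω u) := by
      intro ω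
      rw [Finset.prod_pair h13]
      have := sgn_mul_self (Hf ω w₂)
      linear_combination (sgn (Hf ω w₁) * sgn (Hf ω w₃)) * this
    simp only [this]
    exact sign_sum_zero p Hf hH4 _ (Finset.insert_nonempty _ _)
      (le_trans (Finset.card_insert_le _ _) (by simp))
  by_cases h34 : w₃ = w₄
  · subst h34
    have : ∀ ω, sgn (Hf ω w₁) * sgn (Hf ω w₂) * sgn (Hf ω w₃) * sgn (Hf ω w₃)
        = ∏ u ∈ ({w₁, w₂} : Finset (Fin n → Bool)), sgn (Hf ω u) := by
      intro ω
      rw [Finset.prod_pair h12]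
      have := sgn_mul_self (Hf ω w₃)
      linear_combination (sgn (Hf ω w₁) * sgn (Hf ω w₂)) * this
    simp only [this]
    exact sign_sum_zero p Hf hH4 _ (Finset.insert_nonempty _ _)
      (le_trans (Finset.card_insert_le _ _) (by simp))
  · have hmem1 : w₁ ∉ ({w₂, w₃, w₄} : Finset (Fin n → Bool)) := by simp [h12, h13, h14]
    have hmem2 : w₂ ∉ ({w₃, w₄} : Finset (Fin n → Bool)) := by simp [h23, h24]
    have hmem3 : w₃ ∉ ({w₄} : Finset (Fin n → Bool)) := by simp [h34]
    have : ∀ ω, sgn (Hf ω w₁) * sgn (Hf ω w₂) * sgn (Hf ω w₃) * sgn (Hf ω w₄)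
        = ∏ u ∈ ({w₁, w₂, w₃, w₄} : Finset (Fin n → Bool)), sgn (Hf ω u) := by
      intro ω
      rw [Finset.prod_insert hmem1, Finset.prod_insert hmem2, Finset.prod_insert hmem3,
        Finset.prod_singleton]
      ring
    simp only [this]
    apply sign_sum_zero p Hf hH4 _ (Finset.insert_nonempty _ _)
    rw [Finset.card_insert_of_notMem hmem1, Finset.card_insert_of_notMem hmem2,
      Finset.card_insert_of_notMem hmem3, Finset.card_singleton]
section Aux2
variable {Ω : Type*} [Fintype Ω] (p : Ω → ℝ)

lemma pr_eq_sum_ind (E : Ω → Prop) :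
    pr p E = ∑ ω, p ω * ind (E ω) := by
  unfold pr ind
  apply Finset.sum_congr rfl; intro ω _
  by_cases h : E ω <;> simp [h]

lemma pr_eq_zero_of {E : Ω → Prop} (h : ∀ ω, ¬ E ω) : pr p E = 0 := by
  unfold pr
  apply Finset.sum_eq_zero; intro ω _
  rw [if_neg (h ω)]

lemma pr_fiber_decomp {V : Type*} [Fintype V] (φ : Ω → V) (E : Ω → Prop) :
    pr p E = ∑ v, pr p (fun ω => E ω ∧ φ ω = v) := by
  unfold pr
  rw [Finset.sum_comm]
  apply Finset.sum_congr rfl; intro ω _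
  by_cases hE : E ω
  · simp only [hE, true_and, if_true]
    rw [Finset.sum_ite_eq Finset.univ (φ ω) (fun _ => p ω)]
    simp
  · simp only [hE, false_and, if_false]
    simp

lemma ind_decomp {V W : Type*} [Fintype V] [Fintype W] (v : V) (w : W) (Q : V → W → Prop) :
    ind (Q v w)
      = ∑ a : V, ∑ b : W, ind (v = a ∧ w = b ∧ Q a b) := by
  unfold ind
  have step : ∀ a b, (@ite ℝ (v = a ∧ w = b ∧ Q a b) (Classical.propDecidable _) 1 0)
      = if v = a then (if w = b then (if Q a b then (1:ℝ) else 0) else 0) else 0 := by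
    intro a b
    by_cases h1 : v = a <;> by_cases h2 : w = b <;> by_cases h3 : Q a b <;> simp [h1, h2, h3]
  simp only [step]
  have pull : ∀ a : V, (∑ b : W, if v = a then (if w = b then (if Q a b then (1:ℝ) else 0) else 0) else 0)
      = if v = a then (∑ b : W, if w = b then (if Q a b then (1:ℝ) else 0) else 0) else 0 := by
    intro a; split <;> simp
  rw [Finset.sum_congr rfl (fun a _ => pull a)]
  rw [Finset.sum_ite_eq Finset.univ v
    (fun a => ∑ b : W, (if w = b then (if Q a b then (1:ℝ) else 0) else 0))]
  rw [if_pos (Finset.mem_univ v)]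
  rw [Finset.sum_ite_eq Finset.univ w (fun b => (if Q v b then (1:ℝ) else 0))]
  simp

lemma pr_fiber_factor {V : Type*} [Fintype V] (φ : Ω → V) (Q : V → Prop) :
    pr p (fun ω => Q (φ ω)) = ∑ v, pr p (fun ω => φ ω = v) * ind (Q v) := by
  rw [← sum_fiber p φ (fun v => ind (Q v))]
  unfold pr ind
  apply Finset.sum_congr rfl; intro ω _
  by_cases h : Q (φ ω) <;> simp [h]

end Aux2

/-- The canonical restricted tuple of round functions. -/
abbrev tupT (n m₀ : ℕ) := ∀ m : {m // m ∈ Finset.Icc m₀ n}, (Fin m.1 → Bool) → (Fin m.1 → Bool)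

/-- Extend a restricted tuple to all of `ℕ` by the identity. -/
def extT {n m₀ : ℕ} (c : tupT n m₀) : ∀ m : ℕ, (Fin m → Bool) → (Fin m → Bool) :=
  fun m => if h : m ∈ Finset.Icc m₀ n then c ⟨m, h⟩ else id

lemma extT_mem {n m₀ : ℕ} (c : tupT n m₀) (m : ℕ) (h : m ∈ Finset.Icc m₀ n) :
    extT c m = c ⟨m, h⟩ := dif_pos h

lemma setup_factor (n m₀ : ℕ)
    (Ω : Type*) [Fintype Ω] (p : Ω → ℝ) (hp1 : ∑ ω, p ω = 1)
    (F : ∀ m : ℕ, Ω → (Fin m → Bool) → (Fin m → Bool))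
    (Hf : Ω → (Fin n → Bool) → Bool)
    (hInd : ∀ (g : ∀ m : ℕ, (Fin m → Bool) → (Fin m → Bool))
        (hh : (Fin n → Bool) → Bool),
      pr p (fun ω => (∀ m ∈ Finset.Icc m₀ n, F m ω = g m) ∧ Hf ω = hh)
        = (∏ m ∈ Finset.Icc m₀ n, pr p (fun ω => F m ω = g m))
            * pr p (fun ω => Hf ω = hh)) :
    (∀ (c : tupT n m₀) (hh : (Fin n → Bool) → Bool),
      pr p (fun ω => (fun m : {m // m ∈ Finset.Icc m₀ n} => F m.1 ω) = c ∧ Hf ω = hh)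
        = (∏ m : {m // m ∈ Finset.Icc m₀ n}, pr p (fun ω => F m.1 ω = c m))
            * pr p (fun ω => Hf ω = hh))
    ∧ (∀ c : tupT n m₀,
      pr p (fun ω => (fun m : {m // m ∈ Finset.Icc m₀ n} => F m.1 ω) = c)
        = ∏ m : {m // m ∈ Finset.Icc m₀ n}, pr p (fun ω => F m.1 ω = c m)) := by
  classical
  have key : ∀ (c : tupT n m₀) (hh : (Fin n → Bool) → Bool),
      pr p (fun ω => (fun m : {m // m ∈ Finset.Icc m₀ n} => F m.1 ω) = c ∧ Hf ω = hh)
        = (∏ m : {m // m ∈ Finset.Icc m₀ n}, pr p (fun ω => F m.1 ω = c m))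
            * pr p (fun ω => Hf ω = hh) := by
    intro c hh
    have hiff : ∀ ω, ((fun m : {m // m ∈ Finset.Icc m₀ n} => F m.1 ω) = c ∧ Hf ω = hh)
        ↔ ((∀ m ∈ Finset.Icc m₀ n, F m ω = extT c m) ∧ Hf ω = hh) := by
      intro ω
      constructor
      · rintro ⟨h1, h2⟩
        refine ⟨fun m hm => ?_, h2⟩
        rw [extT_mem c m hm]
        exact congrFun h1 ⟨m, hm⟩
      · rintro ⟨h1, h2⟩
        refine ⟨funext fun m => ?_, h2⟩
        have := h1 m.1 m.2
        rwa [extT_mem c m.1 m.2] at this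
    rw [pr_congr p hiff, hInd (extT c) hh]
    congr 1
    rw [← Finset.prod_coe_sort (Finset.Icc m₀ n)
      (fun m => pr p (fun ω => F m ω = extT c m))]
    apply Finset.prod_congr rfl
    intro m _
    congr 1
    rw [extT_mem c m.1 m.2]
  refine ⟨key, fun c => ?_⟩
  have hdec := pr_fiber_decomp p Hf
    (fun ω => (fun m : {m // m ∈ Finset.Icc m₀ n} => F m.1 ω) = c)
  rw [hdec]
  have : ∀ hh, pr p (fun ω =>
        ((fun m : {m // m ∈ Finset.Icc m₀ n} => F m.1 ω) = c) ∧ Hf ω = hh)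
      = (∏ m : {m // m ∈ Finset.Icc m₀ n}, pr p (fun ω => F m.1 ω = c m))
          * pr p (fun ω => Hf ω = hh) := fun hh => key c hh
  rw [Finset.sum_congr rfl (fun hh _ => this hh), ← Finset.mul_sum]
  have hH1 : ∑ hh : (Fin n → Bool) → Bool, pr p (fun ω => Hf ω = hh) = 1 := by
    have := sum_fiber p Hf (fun _ => (1:ℝ))
    simp only [mul_one] at this
    rw [← this, hp1]
  rw [hH1, mul_one]
lemma round_bound (n m₀ k : ℕ) (hmn : m₀ + k ≤ n)
    (Ω : Type*) [Fintype Ω] (p : Ω → ℝ)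
    (hp0 : ∀ ω, 0 ≤ p ω) (hp1 : ∑ ω, p ω = 1)
    (F : ∀ m : ℕ, Ω → (Fin m → Bool) → (Fin m → Bool))
    (Hf : Ω → (Fin n → Bool) → Bool)
    (hFpair : ∀ m, m₀ ≤ m → m ≤ n → ∀ x y : Fin m → Bool, x ≠ y →
      ∀ a b : Fin m → Bool,
        pr p (fun ω => F m ω x = a ∧ F m ω y = b) = ((1 : ℝ) / 2 ^ m) ^ 2)
    (hInd : ∀ (g : ∀ m : ℕ, (Fin m → Bool) → (Fin m → Bool))
        (hh : (Fin n → Bool) → Bool),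
      pr p (fun ω => (∀ m ∈ Finset.Icc m₀ n, F m ω = g m) ∧ Hf ω = hh)
        = (∏ m ∈ Finset.Icc m₀ n, pr p (fun ω => F m ω = g m))
            * pr p (fun ω => Hf ω = hh))
    (x y : Fin n → Bool) :
    pr p (fun ω =>
        msb (m₀+k) hmn (chainK n (fun m' => F m' ω) m₀ k x)
          ≠ msb (m₀+k) hmn (chainK n (fun m' => F m' ω) m₀ k y)
        ∧ F (m₀+k) ω (msb (m₀+k) hmn (chainK n (fun m' => F m' ω) m₀ k x))
          = F (m₀+k) ω (msb (m₀+k) hmn (chainK n (fun m' => F m' ω) m₀ k y)))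
      ≤ (1:ℝ) / 2 ^ (m₀ + k) := by
  classical
  obtain ⟨hfact, hνF⟩ := setup_factor n m₀ Ω p hp1 F Hf hInd
  have hmK : m₀ + k ∈ Finset.Icc m₀ n := Finset.mem_Icc.mpr ⟨by omega, hmn⟩
  set i₀ : {m // m ∈ Finset.Icc m₀ n} := ⟨m₀ + k, hmK⟩ with hi₀
  set μ : ∀ m' : {m // m ∈ Finset.Icc m₀ n},
      ((Fin m'.1 → Bool) → (Fin m'.1 → Bool)) → ℝ :=
    fun m' φ => pr p (fun ω => F m'.1 ω = φ) with hμ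
  have hμ0 : ∀ m' φ, 0 ≤ μ m' φ := fun m' φ => pr_nonneg p hp0 _
  have hμtot : ∀ m' : {m // m ∈ Finset.Icc m₀ n}, ∑ φ, μ m' φ = 1 := by
    intro m'
    have := sum_fiber p (fun ω => F m'.1 ω) (fun _ => (1:ℝ))
    simp only [mul_one] at this
    rw [← this, hp1]
  set Ψx : tupT n m₀ → (Fin (m₀+k) → Bool) :=
    fun c => msb (m₀+k) hmn (chainK n (extT c) m₀ k x) with hΨx
  set Ψy : tupT n m₀ → (Fin (m₀+k) → Bool) :=
    fun c => msb (m₀+k) hmn (chainK n (extT c) m₀ k y) with hΨy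
  -- rewrite chain through extT
  have hchain : ∀ (ω : Ω) (z : Fin n → Bool),
      chainK n (fun m' => F m' ω) m₀ k z
        = chainK n (extT (fun m' : {m // m ∈ Finset.Icc m₀ n} => F m'.1 ω)) m₀ k z := by
    intro ω z
    apply chainK_congr
    intro m' h1 h2 h3
    rw [extT_mem _ m' (Finset.mem_Icc.mpr ⟨h1, h3⟩)]
  have hevent : pr p (fun ω =>
        msb (m₀+k) hmn (chainK n (fun m' => F m' ω) m₀ k x)
          ≠ msb (m₀+k) hmn (chainK n (fun m' => F m' ω) m₀ k y)
        ∧ F (m₀+k) ω (msb (m₀+k) hmn (chainK n (fun m' => F m' ω) m₀ k x))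
          = F (m₀+k) ω (msb (m₀+k) hmn (chainK n (fun m' => F m' ω) m₀ k y)))
      = pr p (fun ω =>
        Ψx (fun m' => F m'.1 ω) ≠ Ψy (fun m' => F m'.1 ω)
        ∧ (fun m' : {m // m ∈ Finset.Icc m₀ n} => F m'.1 ω) i₀ (Ψx (fun m' => F m'.1 ω))
          = (fun m' : {m // m ∈ Finset.Icc m₀ n} => F m'.1 ω) i₀ (Ψy (fun m' => F m'.1 ω))) := by
    apply pr_congr
    intro ω
    rw [hΨx, hΨy]
    simp only [← hchain ω]
    exact Iff.rfl
  rw [hevent]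
  -- expectation over the tuple
  have hexp : pr p (fun ω =>
        Ψx (fun m' => F m'.1 ω) ≠ Ψy (fun m' => F m'.1 ω)
        ∧ (fun m' : {m // m ∈ Finset.Icc m₀ n} => F m'.1 ω) i₀ (Ψx (fun m' => F m'.1 ω))
          = (fun m' : {m // m ∈ Finset.Icc m₀ n} => F m'.1 ω) i₀ (Ψy (fun m' => F m'.1 ω)))
      = ∑ c : tupT n m₀, pr p (fun ω => (fun m' : {m // m ∈ Finset.Icc m₀ n} => F m'.1 ω) = c)
          * ind ((Ψx c ≠ Ψy c ∧ c i₀ (Ψx c) = c i₀ (Ψy c))) :=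
    pr_fiber_factor p (fun ω (m' : {m // m ∈ Finset.Icc m₀ n}) => F m'.1 ω)
      (fun c : tupT n m₀ => Ψx c ≠ Ψy c ∧ c i₀ (Ψx c) = c i₀ (Ψy c))
  rw [hexp]
  -- replace pr by the product measure
  have hrw : ∀ c : tupT n m₀,
      pr p (fun ω => (fun m' : {m // m ∈ Finset.Icc m₀ n} => F m'.1 ω) = c)
        = ∏ m', μ m' (c m') := fun c => hνF c
  rw [Finset.sum_congr rfl (fun c _ => by rw [hrw c])]
  -- decompose the indicator over values (a, b)
  have hdec : ∀ c : tupT n m₀,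
      ind ((Ψx c ≠ Ψy c ∧ c i₀ (Ψx c) = c i₀ (Ψy c)))
        = ∑ a : Fin (m₀+k) → Bool, ∑ b : Fin (m₀+k) → Bool,
            ind (Ψx c = a ∧ Ψy c = b ∧ (a ≠ b ∧ c i₀ a = c i₀ b)) := by
    intro c
    exact ind_decomp (Ψx c) (Ψy c) (fun a b => a ≠ b ∧ c i₀ a = c i₀ b)
  have hpush : ∀ c : tupT n m₀,
      (∏ m', μ m' (c m')) * ind ((Ψx c ≠ Ψy c ∧ c i₀ (Ψx c) = c i₀ (Ψy c)))
        = ∑ a : Fin (m₀+k) → Bool, ∑ b : Fin (m₀+k) → Bool,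
            (∏ m', μ m' (c m'))
              * ind (Ψx c = a ∧ Ψy c = b ∧ (a ≠ b ∧ c i₀ a = c i₀ b)) := by
    intro c
    rw [hdec c, Finset.mul_sum]
    exact Finset.sum_congr rfl (fun a _ => Finset.mul_sum _ _ _)
  rw [Finset.sum_congr rfl (fun c _ => hpush c)]
  rw [Finset.sum_comm]
  rw [Finset.sum_congr rfl (fun a (_ : a ∈ Finset.univ) =>
    Finset.sum_comm)]
  -- now : ∑ a ∑ b ∑ c (∏ μ) * ind(...)
  have key : ∀ a b : Fin (m₀+k) → Bool,
      (∑ c : tupT n m₀, (∏ m', μ m' (c m'))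
          * ind (Ψx c = a ∧ Ψy c = b ∧ (a ≠ b ∧ c i₀ a = c i₀ b)))
        ≤ ((1:ℝ)/2^(m₀+k)) * (∑ c : tupT n m₀, (∏ m', μ m' (c m'))
            * ind (Ψx c = a ∧ Ψy c = b)) := by
    intro a b
    by_cases hab : a = b
    · have hz : ∀ c : tupT n m₀,
          (∏ m', μ m' (c m'))
            * ind (Ψx c = a ∧ Ψy c = b ∧ (a ≠ b ∧ c i₀ a = c i₀ b))
          = 0 := by
        intro c
        rw [ind_of_not (by tauto), mul_zero]
      rw [Finset.sum_congr rfl (fun c _ => hz c), Finset.sum_const_zero]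
      apply mul_nonneg (by positivity)
      apply Finset.sum_nonneg
      intro c _
      apply mul_nonneg (Finset.prod_nonneg (fun m' _ => hμ0 m' _)) (ind_nonneg _)
    · -- use pi_split
      have hiff : ∀ c : tupT n m₀,
          (Ψx c = a ∧ Ψy c = b ∧ (a ≠ b ∧ c i₀ a = c i₀ b))
            ↔ ((Ψx c = a ∧ Ψy c = b) ∧ (fun φ => φ a = φ b) (c i₀)) := by
        intro c; simp only []; tauto
      rw [Finset.sum_congr rfl (fun c _ => by
        rw [ind_congr (hiff c)])]
      have hP : ∀ (c : tupT n m₀) (φ : (Fin i₀.1 → Bool) → (Fin i₀.1 → Bool)),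
          ((Ψx (Function.update c i₀ φ) = a ∧ Ψy (Function.update c i₀ φ) = b)
            ↔ (Ψx c = a ∧ Ψy c = b)) := by
        intro c φ
        have hchx : ∀ z : Fin n → Bool, chainK n (extT (Function.update c i₀ φ)) m₀ k z
            = chainK n (extT c) m₀ k z := by
          intro z
          apply chainK_congr
          intro m' h1 h2 h3
          have hm'K : m' ∈ Finset.Icc m₀ n := Finset.mem_Icc.mpr ⟨h1, h3⟩
          rw [extT_mem _ m' hm'K, extT_mem _ m' hm'K]
          have hne : (⟨m', hm'K⟩ : {m // m ∈ Finset.Icc m₀ n}) ≠ i₀ := by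
            intro hcon
            have := congrArg Subtype.val hcon
            simp only [hi₀] at this
            omega
          rw [Function.update_of_ne hne]
        rw [hΨx, hΨy]
        simp only [hchx]
      have := pi_split (fun m' : {m // m ∈ Finset.Icc m₀ n} =>
          ((Fin m'.1 → Bool) → (Fin m'.1 → Bool))) μ i₀ (hμtot i₀)
        (fun c => Ψx c = a ∧ Ψy c = b) hP (fun φ => φ a = φ b)
      rw [this]
      apply mul_le_mul_of_nonneg_right
      · -- ∑ φ, μ i₀ φ * ind(φ a = φ b) = 1/2^(m₀+k)
        have h1 : (∑ φ : (Fin i₀.1 → Bool) → (Fin i₀.1 → Bool),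
            μ i₀ φ * ind (φ a = φ b))
            = pr p (fun ω => F (m₀+k) ω a = F (m₀+k) ω b) :=
          (pr_fiber_factor p (fun ω => F (m₀+k) ω) (fun φ => φ a = φ b)).symm
        rw [h1]
        have h2 : pr p (fun ω => F (m₀+k) ω a = F (m₀+k) ω b)
            = ∑ v : Fin (m₀+k) → Bool, pr p (fun ω => F (m₀+k) ω a = v ∧ F (m₀+k) ω b = v) := by
          rw [pr_fiber_decomp p (fun ω => F (m₀+k) ω a)]
          apply Finset.sum_congr rfl
          intro v _
          apply pr_congr
          intro ω
          constructor
          · rintro ⟨h3, h4⟩; exact ⟨h4, h4 ▸ h3.symm⟩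
          · rintro ⟨h3, h4⟩; exact ⟨h3.trans h4.symm, h3⟩
        rw [h2]
        rw [Finset.sum_congr rfl (fun v _ => hFpair (m₀+k) (by omega) hmn a b hab v v)]
        rw [Finset.sum_const, Finset.card_univ]
        have hcard : Fintype.card (Fin (m₀+k) → Bool) = 2 ^ (m₀+k) := by
          simp [Fintype.card_fun]
        rw [hcard, nsmul_eq_mul]
        have h2m : ((2:ℝ)) ^ (m₀+k) ≠ 0 := by positivity
        push_cast
        apply le_of_eq
        have hc : (2:ℝ)^(m₀+k) * ((1:ℝ)/2^(m₀+k)) = 1 := mul_one_div_cancel h2m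
        calc (2:ℝ)^(m₀+k) * ((1:ℝ)/2^(m₀+k))^2
            = ((2:ℝ)^(m₀+k) * ((1:ℝ)/2^(m₀+k))) * ((1:ℝ)/2^(m₀+k)) := by ring
          _ = (1:ℝ)/2^(m₀+k) := by rw [hc, one_mul]
      · apply Finset.sum_nonneg
        intro c _
        apply mul_nonneg (Finset.prod_nonneg (fun m' _ => hμ0 m' _)) (ind_nonneg _)
  -- assemble
  have hone : ∀ c : tupT n m₀,
      (∑ a : Fin (m₀+k) → Bool, ∑ b : Fin (m₀+k) → Bool,
        ind (Ψx c = a ∧ Ψy c = b)) = 1 := by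
    intro c
    have h := ind_decomp (Ψx c) (Ψy c) (fun _ _ => True)
    simp only [and_true, ind_of trivial] at h
    rw [← h]
  have hsum1 : (∑ c : tupT n m₀, ∏ m', μ m' (c m')) = 1 := by
    have h2 := sum_fiber p (fun ω (m' : {m // m ∈ Finset.Icc m₀ n}) => F m'.1 ω)
      (fun _ : tupT n m₀ => (1:ℝ))
    simp only [mul_one] at h2
    rw [Finset.sum_congr rfl (fun c _ => (hνF c).symm), ← h2, hp1]
  calc ∑ a : Fin (m₀+k) → Bool, ∑ b : Fin (m₀+k) → Bool,
        (∑ c : tupT n m₀, (∏ m', μ m' (c m'))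
          * ind (Ψx c = a ∧ Ψy c = b ∧ (a ≠ b ∧ c i₀ a = c i₀ b)))
      ≤ ∑ a : Fin (m₀+k) → Bool, ∑ b : Fin (m₀+k) → Bool,
        ((1:ℝ)/2^(m₀+k)) * (∑ c : tupT n m₀, (∏ m', μ m' (c m'))
            * ind (Ψx c = a ∧ Ψy c = b)) := by
        apply Finset.sum_le_sum; intro a _
        apply Finset.sum_le_sum; intro b _
        exact key a b
    _ = ((1:ℝ)/2^(m₀+k)) * ∑ a : Fin (m₀+k) → Bool, ∑ b : Fin (m₀+k) → Bool,
        (∑ c : tupT n m₀, (∏ m', μ m' (c m'))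
            * ind (Ψx c = a ∧ Ψy c = b)) := by
        rw [Finset.mul_sum]
        apply Finset.sum_congr rfl; intro a _
        rw [Finset.mul_sum]
    _ = ((1:ℝ)/2^(m₀+k)) * ∑ c : tupT n m₀, (∏ m', μ m' (c m'))
          * (∑ a : Fin (m₀+k) → Bool, ∑ b : Fin (m₀+k) → Bool,
              ind (Ψx c = a ∧ Ψy c = b)) := by
        congr 1
        rw [Finset.sum_congr rfl (fun a (_ : a ∈ Finset.univ) =>
          Finset.sum_comm)]
        rw [Finset.sum_comm]
        apply Finset.sum_congr rfl; intro c _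
        rw [Finset.sum_congr rfl
          (fun a (_ : a ∈ Finset.univ) => (Finset.mul_sum _ _ _).symm)]
        rw [← Finset.mul_sum]
    _ = ((1:ℝ)/2^(m₀+k)) := by
        rw [Finset.sum_congr rfl (fun c _ => by rw [hone c, mul_one]), hsum1, mul_one]
lemma collision_bound (n m₀ : ℕ) (hm₀n : m₀ ≤ n)
    (Ω : Type*) [Fintype Ω] (p : Ω → ℝ)
    (hp0 : ∀ ω, 0 ≤ p ω) (hp1 : ∑ ω, p ω = 1)
    (F : ∀ m : ℕ, Ω → (Fin m → Bool) → (Fin m → Bool))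
    (Hf : Ω → (Fin n → Bool) → Bool)
    (hFpair : ∀ m, m₀ ≤ m → m ≤ n → ∀ x y : Fin m → Bool, x ≠ y →
      ∀ a b : Fin m → Bool,
        pr p (fun ω => F m ω x = a ∧ F m ω y = b) = ((1 : ℝ) / 2 ^ m) ^ 2)
    (hInd : ∀ (g : ∀ m : ℕ, (Fin m → Bool) → (Fin m → Bool))
        (hh : (Fin n → Bool) → Bool),
      pr p (fun ω => (∀ m ∈ Finset.Icc m₀ n, F m ω = g m) ∧ Hf ω = hh)
        = (∏ m ∈ Finset.Icc m₀ n, pr p (fun ω => F m ω = g m))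
            * pr p (fun ω => Hf ω = hh))
    (x y : Fin n → Bool) (hxy : x ≠ y) :
    pr p (fun ω => rRec n (fun m => F m ω) m₀ x = rRec n (fun m => F m ω) m₀ y)
      ≤ ∑ k ∈ Finset.range (n + 1 - m₀),
          ind (∀ t : Fin n, m₀ + k ≤ (t : ℕ) → x t = y t) * ((1:ℝ) / 2 ^ (m₀ + k)) := by
  classical
  have hincl : ∀ ω, rRec n (fun m => F m ω) m₀ x = rRec n (fun m => F m ω) m₀ y →
      ∃ k ∈ Finset.range (n + 1 - m₀),
        (chainK n (fun m => F m ω) m₀ k x ≠ chainK n (fun m => F m ω) m₀ k y ∧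
         chainK n (fun m => F m ω) m₀ (k+1) x = chainK n (fun m => F m ω) m₀ (k+1) y) := by
    intro ω hR
    have h0 : ¬ (chainK n (fun m => F m ω) m₀ 0 x = chainK n (fun m => F m ω) m₀ 0 y) := by
      simpa [chainK] using hxy
    have hK : chainK n (fun m => F m ω) m₀ (n+1-m₀) x
        = chainK n (fun m => F m ω) m₀ (n+1-m₀) y := by
      rw [← rRec_eq_chainK n _ m₀ (by omega) x, ← rRec_eq_chainK n _ m₀ (by omega) y]
      exact hR
    obtain ⟨k, hk1, hk2, hk3⟩ := first_change (g := fun k => chainK n (fun m => F m ω) m₀ k x = chainK n (fun m => F m ω) m₀ k y) h0 hK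
    exact ⟨k, Finset.mem_range.mpr hk1, hk2, hk3⟩
  calc pr p (fun ω => rRec n (fun m => F m ω) m₀ x = rRec n (fun m => F m ω) m₀ y)
      ≤ pr p (fun ω => ∃ k ∈ Finset.range (n + 1 - m₀),
          (chainK n (fun m => F m ω) m₀ k x ≠ chainK n (fun m => F m ω) m₀ k y ∧
           chainK n (fun m => F m ω) m₀ (k+1) x = chainK n (fun m => F m ω) m₀ (k+1) y)) :=
        pr_mono p hp0 hincl
    _ ≤ ∑ k ∈ Finset.range (n + 1 - m₀), pr p (fun ω =>
          chainK n (fun m => F m ω) m₀ k x ≠ chainK n (fun m => F m ω) m₀ k y ∧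
          chainK n (fun m => F m ω) m₀ (k+1) x = chainK n (fun m => F m ω) m₀ (k+1) y) :=
        pr_exists_le p hp0 _ _
    _ ≤ ∑ k ∈ Finset.range (n + 1 - m₀),
          ind (∀ t : Fin n, m₀ + k ≤ (t : ℕ) → x t = y t) * ((1:ℝ) / 2 ^ (m₀ + k)) := by
        apply Finset.sum_le_sum
        intro k hk
        have hmn : m₀ + k ≤ n := by
          have := Finset.mem_range.mp hk; omega
        have hstep : ∀ (ω : Ω) (z : Fin n → Bool),
            chainK n (fun m => F m ω) m₀ (k+1) z
              = rStep n (fun m => F m ω) (m₀+k) hmn (chainK n (fun m => F m ω) m₀ k z) := by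
          intro ω z
          simp only [chainK]
          rw [dif_pos hmn]
        by_cases hagr : ∀ t : Fin n, m₀ + k ≤ (t : ℕ) → x t = y t
        · rw [ind_of hagr, one_mul]
          calc pr p (fun ω =>
                chainK n (fun m => F m ω) m₀ k x ≠ chainK n (fun m => F m ω) m₀ k y ∧
                chainK n (fun m => F m ω) m₀ (k+1) x = chainK n (fun m => F m ω) m₀ (k+1) y)
              ≤ pr p (fun ω =>
                msb (m₀+k) hmn (chainK n (fun m' => F m' ω) m₀ k x)
                  ≠ msb (m₀+k) hmn (chainK n (fun m' => F m' ω) m₀ k y)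
                ∧ F (m₀+k) ω (msb (m₀+k) hmn (chainK n (fun m' => F m' ω) m₀ k x))
                  = F (m₀+k) ω (msb (m₀+k) hmn (chainK n (fun m' => F m' ω) m₀ k y))) := by
                apply pr_mono p hp0
                intro ω hE
                obtain ⟨h1, h2⟩ := hE
                rw [hstep ω x, hstep ω y] at h2
                obtain ⟨hmsb, hF, _⟩ := rStep_collision hmn h1 h2
                exact ⟨hmsb, hF⟩
            _ ≤ (1:ℝ) / 2 ^ (m₀ + k) :=
                round_bound n m₀ k hmn Ω p hp0 hp1 F Hf hFpair hInd x y
        · rw [ind_of_not hagr, zero_mul]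
          have hz : pr p (fun ω =>
                chainK n (fun m => F m ω) m₀ k x ≠ chainK n (fun m => F m ω) m₀ k y ∧
                chainK n (fun m => F m ω) m₀ (k+1) x = chainK n (fun m => F m ω) m₀ (k+1) y)
              = 0 := by
            apply pr_eq_zero_of
            intro ω hE
            obtain ⟨h1, h2⟩ := hE
            rw [hstep ω x, hstep ω y] at h2
            obtain ⟨_, _, hlow⟩ := rStep_collision hmn h1 h2
            apply hagr
            intro t ht
            have hx := chainK_high n (fun m => F m ω) m₀ k x t (by omega)
            have hy := chainK_high n (fun m => F m ω) m₀ k y t (by omega)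
            rw [← hx, ← hy]
            exact hlow t ht
          rw [hz]
lemma sgn_prod4_le_one (b1 b2 b3 b4 : Bool) :
    sgn b1 * sgn b2 * sgn b3 * sgn b4 ≤ 1 := by
  unfold sgn; split_ifs <;> norm_num

lemma four_point_bound (n m₀ : ℕ) (hm₀n : m₀ ≤ n)
    (Ω : Type*) [Fintype Ω] (p : Ω → ℝ)
    (hp0 : ∀ ω, 0 ≤ p ω) (hp1 : ∑ ω, p ω = 1)
    (F : ∀ m : ℕ, Ω → (Fin m → Bool) → (Fin m → Bool))
    (Hf : Ω → (Fin n → Bool) → Bool)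
    (hH4 : ∀ (s : Finset (Fin n → Bool)) (b : (Fin n → Bool) → Bool), s.card ≤ 4 →
      pr p (fun ω => ∀ u ∈ s, Hf ω u = b u) = ((1 : ℝ) / 2) ^ s.card)
    (hInd : ∀ (g : ∀ m : ℕ, (Fin m → Bool) → (Fin m → Bool))
        (hh : (Fin n → Bool) → Bool),
      pr p (fun ω => (∀ m ∈ Finset.Icc m₀ n, F m ω = g m) ∧ Hf ω = hh)
        = (∏ m ∈ Finset.Icc m₀ n, pr p (fun ω => F m ω = g m))
            * pr p (fun ω => Hf ω = hh))
    (x₁ x₂ x₃ x₄ : Fin n → Bool) :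
    ∑ ω, p ω * (sgn (Hf ω (rRec n (fun m => F m ω) m₀ x₁))
        * sgn (Hf ω (rRec n (fun m => F m ω) m₀ x₂))
        * sgn (Hf ω (rRec n (fun m => F m ω) m₀ x₃))
        * sgn (Hf ω (rRec n (fun m => F m ω) m₀ x₄)))
      ≤ pr p (fun ω => rRec n (fun m => F m ω) m₀ x₁ = rRec n (fun m => F m ω) m₀ x₂)
        + pr p (fun ω => rRec n (fun m => F m ω) m₀ x₁ = rRec n (fun m => F m ω) m₀ x₃)
        + pr p (fun ω => rRec n (fun m => F m ω) m₀ x₁ = rRec n (fun m => F m ω) m₀ x₄) := by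
  classical
  obtain ⟨hfact', hνF⟩ := setup_factor n m₀ Ω p hp1 F Hf hInd
  have hfact : ∀ (c : tupT n m₀) (hh : (Fin n → Bool) → Bool),
      pr p (fun ω => (fun m' : {m // m ∈ Finset.Icc m₀ n} => F m'.1 ω) = c ∧ Hf ω = hh)
        = pr p (fun ω => (fun m' : {m // m ∈ Finset.Icc m₀ n} => F m'.1 ω) = c)
            * pr p (fun ω => Hf ω = hh) := by
    intro c hh
    rw [hfact' c hh, ← hνF c]
  set Rc : tupT n m₀ → (Fin n → Bool) → (Fin n → Bool) :=
    fun c => rRec n (extT c) m₀ with hRc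
  have hR : ∀ (ω : Ω) (z : Fin n → Bool),
      rRec n (fun m => F m ω) m₀ z = Rc (fun m' : {m // m ∈ Finset.Icc m₀ n} => F m'.1 ω) z := by
    intro ω z
    rw [hRc]
    show rRec n (fun m => F m ω) m₀ z
      = rRec n (extT (fun m' : {m // m ∈ Finset.Icc m₀ n} => F m'.1 ω)) m₀ z
    rw [rRec_eq_chainK n _ m₀ (by omega) z, rRec_eq_chainK n _ m₀ (by omega) z]
    exact chainK_congr n _ _ m₀ _
      (fun m' h1 h2 h3 =>
        (extT_mem (fun m'' : {m // m ∈ Finset.Icc m₀ n} => F m''.1 ω) m'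
          (Finset.mem_Icc.mpr ⟨h1, h3⟩)).symm) z
  have hH1 : ∑ hh : (Fin n → Bool) → Bool, pr p (fun ω => Hf ω = hh) = 1 := by
    have := sum_fiber p Hf (fun _ => (1:ℝ))
    simp only [mul_one] at this
    rw [← this, hp1]
  set f : tupT n m₀ → ((Fin n → Bool) → Bool) → ℝ :=
    fun c hh => sgn (hh (Rc c x₁)) * sgn (hh (Rc c x₂)) * sgn (hh (Rc c x₃))
        * sgn (hh (Rc c x₄)) with hf
  have step1 : ∑ ω, p ω * (sgn (Hf ω (rRec n (fun m => F m ω) m₀ x₁))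
        * sgn (Hf ω (rRec n (fun m => F m ω) m₀ x₂))
        * sgn (Hf ω (rRec n (fun m => F m ω) m₀ x₃))
        * sgn (Hf ω (rRec n (fun m => F m ω) m₀ x₄)))
      = ∑ c : tupT n m₀,
          pr p (fun ω => (fun m' : {m // m ∈ Finset.Icc m₀ n} => F m'.1 ω) = c)
            * ∑ hh : (Fin n → Bool) → Bool, pr p (fun ω => Hf ω = hh) * f c hh := by
    calc ∑ ω, p ω * (sgn (Hf ω (rRec n (fun m => F m ω) m₀ x₁))
          * sgn (Hf ω (rRec n (fun m => F m ω) m₀ x₂))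
          * sgn (Hf ω (rRec n (fun m => F m ω) m₀ x₃))
          * sgn (Hf ω (rRec n (fun m => F m ω) m₀ x₄)))
        = ∑ ω, p ω * f (fun m' : {m // m ∈ Finset.Icc m₀ n} => F m'.1 ω) (Hf ω) := by
          apply Finset.sum_congr rfl; intro ω _
          rw [hf]
          simp only [← hR ω]
      _ = ∑ c : tupT n m₀, ∑ hh : (Fin n → Bool) → Bool,
            pr p (fun ω => (fun m' : {m // m ∈ Finset.Icc m₀ n} => F m'.1 ω) = c ∧ Hf ω = hh)
              * f c hh :=
          sum_fiber2 p (fun ω (m' : {m // m ∈ Finset.Icc m₀ n}) => F m'.1 ω) Hf f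
      _ = ∑ c : tupT n m₀,
            pr p (fun ω => (fun m' : {m // m ∈ Finset.Icc m₀ n} => F m'.1 ω) = c)
              * ∑ hh : (Fin n → Bool) → Bool, pr p (fun ω => Hf ω = hh) * f c hh := by
          apply Finset.sum_congr rfl; intro c _
          rw [Finset.mul_sum]
          apply Finset.sum_congr rfl; intro hh _
          rw [hfact c hh, mul_assoc]
  rw [step1]
  -- bound the inner expectation per tuple
  have inner_bound : ∀ c : tupT n m₀,
      (∑ hh : (Fin n → Bool) → Bool, pr p (fun ω => Hf ω = hh) * f c hh)
        ≤ ind (Rc c x₁ = Rc c x₂) + ind (Rc c x₁ = Rc c x₃) + ind (Rc c x₁ = Rc c x₄) := by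
    intro c
    by_cases hcol : (Rc c x₁ = Rc c x₂) ∨ (Rc c x₁ = Rc c x₃) ∨ (Rc c x₁ = Rc c x₄)
    · have hle1 : (∑ hh : (Fin n → Bool) → Bool, pr p (fun ω => Hf ω = hh) * f c hh) ≤ 1 := by
        rw [← hH1]
        apply Finset.sum_le_sum
        intro hh _
        calc pr p (fun ω => Hf ω = hh) * f c hh
            ≤ pr p (fun ω => Hf ω = hh) * 1 := by
              apply mul_le_mul_of_nonneg_left _ (pr_nonneg p hp0 _)
              rw [hf]
              exact sgn_prod4_le_one _ _ _ _
          _ = pr p (fun ω => Hf ω = hh) := mul_one _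
      refine le_trans hle1 ?_
      rcases hcol with h | h | h
      · rw [ind_of h]
        have := ind_nonneg (Rc c x₁ = Rc c x₃)
        have := ind_nonneg (Rc c x₁ = Rc c x₄)
        linarith
      · rw [ind_of h]
        have := ind_nonneg (Rc c x₁ = Rc c x₂)
        have := ind_nonneg (Rc c x₁ = Rc c x₄)
        linarith
      · rw [ind_of h]
        have := ind_nonneg (Rc c x₁ = Rc c x₂)
        have := ind_nonneg (Rc c x₁ = Rc c x₃)
        linarith
    · push_neg at hcol
      obtain ⟨h12, h13, h14⟩ := hcol
      have hzero : (∑ hh : (Fin n → Bool) → Bool, pr p (fun ω => Hf ω = hh) * f c hh) = 0 := by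
        have hrev := sum_fiber p Hf (fun hh => f c hh)
        rw [← hrev, hf]
        exact four_sign p Hf hH4 (Rc c x₁) (Rc c x₂) (Rc c x₃) (Rc c x₄) h12 h13 h14
      rw [hzero]
      have := ind_nonneg (Rc c x₁ = Rc c x₂)
      have := ind_nonneg (Rc c x₁ = Rc c x₃)
      have := ind_nonneg (Rc c x₁ = Rc c x₄)
      linarith
  calc ∑ c : tupT n m₀,
        pr p (fun ω => (fun m' : {m // m ∈ Finset.Icc m₀ n} => F m'.1 ω) = c)
          * ∑ hh : (Fin n → Bool) → Bool, pr p (fun ω => Hf ω = hh) * f c hh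
      ≤ ∑ c : tupT n m₀,
        pr p (fun ω => (fun m' : {m // m ∈ Finset.Icc m₀ n} => F m'.1 ω) = c)
          * (ind (Rc c x₁ = Rc c x₂) + ind (Rc c x₁ = Rc c x₃) + ind (Rc c x₁ = Rc c x₄)) := by
        apply Finset.sum_le_sum
        intro c _
        exact mul_le_mul_of_nonneg_left (inner_bound c) (pr_nonneg p hp0 _)
    _ = (∑ c : tupT n m₀,
          pr p (fun ω => (fun m' : {m // m ∈ Finset.Icc m₀ n} => F m'.1 ω) = c)
            * ind (Rc c x₁ = Rc c x₂))
        + (∑ c : tupT n m₀,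
          pr p (fun ω => (fun m' : {m // m ∈ Finset.Icc m₀ n} => F m'.1 ω) = c)
            * ind (Rc c x₁ = Rc c x₃))
        + (∑ c : tupT n m₀,
          pr p (fun ω => (fun m' : {m // m ∈ Finset.Icc m₀ n} => F m'.1 ω) = c)
            * ind (Rc c x₁ = Rc c x₄)) := by
        rw [← Finset.sum_add_distrib, ← Finset.sum_add_distrib]
        apply Finset.sum_congr rfl; intro c _
        ring
    _ = pr p (fun ω => rRec n (fun m => F m ω) m₀ x₁ = rRec n (fun m => F m ω) m₀ x₂)
        + pr p (fun ω => rRec n (fun m => F m ω) m₀ x₁ = rRec n (fun m => F m ω) m₀ x₃)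
        + pr p (fun ω => rRec n (fun m => F m ω) m₀ x₁ = rRec n (fun m => F m ω) m₀ x₄) := by
        congr 1
        · congr 1
          · rw [pr_congr p (E' := fun ω => Rc (fun m' : {m // m ∈ Finset.Icc m₀ n} => F m'.1 ω) x₁
                = Rc (fun m' : {m // m ∈ Finset.Icc m₀ n} => F m'.1 ω) x₂)
              (fun ω => by rw [hR ω x₁, hR ω x₂])]
            exact (pr_fiber_factor p (fun ω (m' : {m // m ∈ Finset.Icc m₀ n}) => F m'.1 ω)
              (fun c => Rc c x₁ = Rc c x₂)).symm
          · rw [pr_congr p (E' := fun ω => Rc (fun m' : {m // m ∈ Finset.Icc m₀ n} => F m'.1 ω) x₁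
                = Rc (fun m' : {m // m ∈ Finset.Icc m₀ n} => F m'.1 ω) x₃)
              (fun ω => by rw [hR ω x₁, hR ω x₃])]
            exact (pr_fiber_factor p (fun ω (m' : {m // m ∈ Finset.Icc m₀ n}) => F m'.1 ω)
              (fun c => Rc c x₁ = Rc c x₃)).symm
        · rw [pr_congr p (E' := fun ω => Rc (fun m' : {m // m ∈ Finset.Icc m₀ n} => F m'.1 ω) x₁
              = Rc (fun m' : {m // m ∈ Finset.Icc m₀ n} => F m'.1 ω) x₄)
            (fun ω => by rw [hR ω x₁, hR ω x₄])]
          exact (pr_fiber_factor p (fun ω (m' : {m // m ∈ Finset.Icc m₀ n}) => F m'.1 ω)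
            (fun c => Rc c x₁ = Rc c x₄)).symm
lemma sgn_prod4_le_one' (b1 b2 b3 b4 : Bool) :
    sgn b1 * sgn b2 * (sgn b3 * sgn b4) ≤ 1 := by
  unfold sgn; split_ifs <;> norm_num

lemma ind_or_le (P Q : Prop) : ind (P ∨ Q) ≤ ind P + ind Q := by
  unfold ind
  by_cases hP : P <;> by_cases hQ : Q <;> simp [hP, hQ]

lemma ind_and_mul (P Q : Prop) : ind (P ∧ Q) = ind P * ind Q := by
  unfold ind
  by_cases hP : P <;> by_cases hQ : Q <;> simp [hP, hQ]

lemma sum_ind_eq {V : Type*} [Fintype V] (v : V) : ∑ v' : V, ind (v = v') = 1 := by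
  unfold ind
  rw [Finset.sum_ite_eq Finset.univ v (fun _ => (1:ℝ))]
  simp

lemma weight_bound (m a : ℕ) (h : a ≤ m) : ((1:ℝ)/2^m) * 2^a ≤ 1 := by
  rw [div_mul_eq_mul_div, one_mul, div_le_one (by positivity)]
  exact pow_le_pow_right₀ one_le_two h

lemma mergeCut_inj1 {n : ℕ} (X : Finset (Fin n)) (i i' : {t : Fin n // t ∈ X} → Bool)
    (j j' : {t : Fin n // t ∉ X} → Bool) (h : mergeCut X i j = mergeCut X i' j') : i = i' := by
  funext t
  have := congrFun h t.1
  unfold mergeCut at this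
  rw [dif_pos t.2, dif_pos t.2] at this
  simpa using this

lemma mergeCut_inj2 {n : ℕ} (X : Finset (Fin n)) (i i' : {t : Fin n // t ∈ X} → Bool)
    (j j' : {t : Fin n // t ∉ X} → Bool) (h : mergeCut X i j = mergeCut X i' j') : j = j' := by
  funext t
  have := congrFun h t.1
  unfold mergeCut at this
  rw [dif_neg t.2, dif_neg t.2] at this
  simpa using this

lemma agree_iff_X {n : ℕ} (X : Finset (Fin n)) (m : ℕ) (i i' : {t : Fin n // t ∈ X} → Bool)
    (j : {t : Fin n // t ∉ X} → Bool) :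
    (∀ t : Fin n, m ≤ (t : ℕ) → mergeCut X i j t = mergeCut X i' j t)
      ↔ (∀ t ∈ Finset.univ.filter (fun t : {t : Fin n // t ∈ X} => m ≤ (t.1 : ℕ)), i t = i' t) := by
  constructor
  · intro h t ht
    have hm := (Finset.mem_filter.mp ht).2
    have := h t.1 hm
    unfold mergeCut at this
    rw [dif_pos t.2, dif_pos t.2] at this
    simpa using this
  · intro h t ht
    unfold mergeCut
    by_cases hX : t ∈ X
    · rw [dif_pos hX, dif_pos hX]
      exact h ⟨t, hX⟩ (Finset.mem_filter.mpr ⟨Finset.mem_univ _, ht⟩)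
    · rw [dif_neg hX, dif_neg hX]

lemma agree_iff_J {n : ℕ} (X : Finset (Fin n)) (m : ℕ) (i : {t : Fin n // t ∈ X} → Bool)
    (j j' : {t : Fin n // t ∉ X} → Bool) :
    (∀ t : Fin n, m ≤ (t : ℕ) → mergeCut X i j t = mergeCut X i j' t)
      ↔ (∀ t ∈ Finset.univ.filter (fun t : {t : Fin n // t ∉ X} => m ≤ (t.1 : ℕ)), j t = j' t) := by
  constructor
  · intro h t ht
    have hm := (Finset.mem_filter.mp ht).2
    have := h t.1 hm
    unfold mergeCut at this
    rw [dif_neg t.2, dif_neg t.2] at this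
    simpa using this
  · intro h t ht
    unfold mergeCut
    by_cases hX : t ∈ X
    · rw [dif_pos hX, dif_pos hX]
    · rw [dif_neg hX, dif_neg hX]
      exact h ⟨t, hX⟩ (Finset.mem_filter.mpr ⟨Finset.mem_univ _, ht⟩)

lemma agree_iff_XJ {n : ℕ} (X : Finset (Fin n)) (m : ℕ) (i i' : {t : Fin n // t ∈ X} → Bool)
    (j j' : {t : Fin n // t ∉ X} → Bool) :
    (∀ t : Fin n, m ≤ (t : ℕ) → mergeCut X i j t = mergeCut X i' j' t)
      ↔ ((∀ t ∈ Finset.univ.filter (fun t : {t : Fin n // t ∈ X} => m ≤ (t.1 : ℕ)), i t = i' t)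
        ∧ (∀ t ∈ Finset.univ.filter (fun t : {t : Fin n // t ∉ X} => m ≤ (t.1 : ℕ)), j t = j' t)) := by
  constructor
  · intro h
    constructor
    · intro t ht
      have hm := (Finset.mem_filter.mp ht).2
      have := h t.1 hm
      unfold mergeCut at this
      rw [dif_pos t.2, dif_pos t.2] at this
      simpa using this
    · intro t ht
      have hm := (Finset.mem_filter.mp ht).2
      have := h t.1 hm
      unfold mergeCut at this
      rw [dif_neg t.2, dif_neg t.2] at this
      simpa using this
  · rintro ⟨h1, h2⟩ t ht
    unfold mergeCut
    by_cases hX : t ∈ X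
    · rw [dif_pos hX, dif_pos hX]
      exact h1 ⟨t, hX⟩ (Finset.mem_filter.mpr ⟨Finset.mem_univ _, ht⟩)
    · rw [dif_neg hX, dif_neg hX]
      exact h2 ⟨t, hX⟩ (Finset.mem_filter.mpr ⟨Finset.mem_univ _, ht⟩)

/-- The low (below `m`) coordinates inside and outside `X` together number at most `m`. -/
lemma low_card_bound {n : ℕ} (X : Finset (Fin n)) (m : ℕ) :
    (Finset.univ.filter (fun t : {t : Fin n // t ∈ X} => ¬ (m ≤ (t.1 : ℕ)))).card
      + (Finset.univ.filter (fun t : {t : Fin n // t ∉ X} => ¬ (m ≤ (t.1 : ℕ)))).card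
      ≤ m := by
  classical
  set A := (Finset.univ.filter (fun t : {t : Fin n // t ∈ X} => ¬ (m ≤ (t.1 : ℕ)))).image
    (fun t => t.1) with hA
  set B := (Finset.univ.filter (fun t : {t : Fin n // t ∉ X} => ¬ (m ≤ (t.1 : ℕ)))).image
    (fun t => t.1) with hB
  have hcardA : A.card
      = (Finset.univ.filter (fun t : {t : Fin n // t ∈ X} => ¬ (m ≤ (t.1 : ℕ)))).card :=
    Finset.card_image_of_injective _ Subtype.val_injective
  have hcardB : B.card
      = (Finset.univ.filter (fun t : {t : Fin n // t ∉ X} => ¬ (m ≤ (t.1 : ℕ)))).card :=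
    Finset.card_image_of_injective _ Subtype.val_injective
  have hdisj : Disjoint A B := by
    rw [Finset.disjoint_left]
    intro a haA haB
    rw [hA, Finset.mem_image] at haA
    rw [hB, Finset.mem_image] at haB
    obtain ⟨t, _, rfl⟩ := haA
    obtain ⟨u, _, hu⟩ := haB
    exact u.2 (by rw [hu]; exact t.2)
  have hsub : A ∪ B ⊆ Finset.univ.filter (fun t : Fin n => (t : ℕ) < m) := by
    intro a ha
    rw [Finset.mem_union] at ha
    rcases ha with ha | ha
    · rw [hA, Finset.mem_image] at ha
      obtain ⟨t, ht, rfl⟩ := ha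
      have := (Finset.mem_filter.mp ht).2
      exact Finset.mem_filter.mpr ⟨Finset.mem_univ _, by omega⟩
    · rw [hB, Finset.mem_image] at ha
      obtain ⟨t, ht, rfl⟩ := ha
      have := (Finset.mem_filter.mp ht).2
      exact Finset.mem_filter.mpr ⟨Finset.mem_univ _, by omega⟩
  have hfil : (Finset.univ.filter (fun t : Fin n => (t : ℕ) < m)).card ≤ m := by
    have : (Finset.univ.filter (fun t : Fin n => (t : ℕ) < m)).card
        ≤ (Finset.range m).card := by
      refine Finset.card_le_card_of_injOn (fun t : Fin n => (t : ℕ)) ?_ ?_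
      · intro t ht
        exact Finset.mem_range.mpr (Finset.mem_filter.mp ht).2
      · intro t _ u _ h
        exact Fin.ext h
    simpa using this
  calc (Finset.univ.filter (fun t : {t : Fin n // t ∈ X} => ¬ (m ≤ (t.1 : ℕ)))).card
        + (Finset.univ.filter (fun t : {t : Fin n // t ∉ X} => ¬ (m ≤ (t.1 : ℕ)))).card
      = A.card + B.card := by rw [hcardA, hcardB]
    _ = (A ∪ B).card := (Finset.card_union_of_disjoint hdisj).symm
    _ ≤ (Finset.univ.filter (fun t : Fin n => (t : ℕ) < m)).card := Finset.card_le_card hsub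
    _ ≤ m := hfil

/-- Double-sum agreement count, in the convenient orientation. -/
lemma count_agree_pairs {σ : Type*} [Fintype σ] [DecidableEq σ] (s : Finset σ) :
    ∑ i : σ → Bool, ∑ i' : σ → Bool, ind (∀ t ∈ s, i t = i' t)
      = (2:ℝ) ^ (Fintype.card σ) * 2 ^ (Fintype.card σ - s.card) := by
  have hsw : ∀ i : σ → Bool, (∑ i' : σ → Bool, ind (∀ t ∈ s, i t = i' t))
      = 2 ^ (Fintype.card σ - s.card) := by
    intro i
    rw [← count_agree_inner s i]
    apply Finset.sum_congr rfl
    intro i' _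
    exact ind_congr (by constructor <;> (intro h t ht; exact (h t ht).symm))
  rw [Finset.sum_congr rfl (fun i _ => hsw i), Finset.sum_const, Finset.card_univ,
    nsmul_eq_mul]
  congr 1
  rw [Fintype.card_fun]
  push_cast
  simp
section Sum4
variable {A B : Type*} [Fintype A] [Fintype B]

lemma sum4_left (g : A → A → ℝ) :
    ∑ i : A, ∑ i' : A, ∑ _j : B, ∑ _j' : B, g i i'
      = (∑ i : A, ∑ i' : A, g i i') * ((Fintype.card B : ℝ) * (Fintype.card B : ℝ)) := by
  symm
  rw [Finset.sum_mul]
  apply Finset.sum_congr rfl; intro i _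
  rw [Finset.sum_mul]
  apply Finset.sum_congr rfl; intro i' _
  simp [Finset.sum_const, Finset.card_univ, nsmul_eq_mul]
  ring

lemma sum4_right (h : B → B → ℝ) :
    ∑ _i : A, ∑ _i' : A, ∑ j : B, ∑ j' : B, h j j'
      = ((Fintype.card A : ℝ) * (Fintype.card A : ℝ)) * (∑ j : B, ∑ j' : B, h j j') := by
  have hin : ∀ _i : A, (∑ _i' : A, ∑ j : B, ∑ j' : B, h j j')
      = (Fintype.card A : ℝ) * ∑ j : B, ∑ j' : B, h j j' := by
    intro i
    rw [Finset.sum_const, Finset.card_univ, nsmul_eq_mul]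
  rw [Finset.sum_congr rfl (fun i _ => hin i), Finset.sum_const, Finset.card_univ,
    nsmul_eq_mul]
  ring

lemma sum4_fact (g : A → A → ℝ) (h : B → B → ℝ) :
    ∑ i : A, ∑ i' : A, ∑ j : B, ∑ j' : B, g i i' * h j j'
      = (∑ i : A, ∑ i' : A, g i i') * (∑ j : B, ∑ j' : B, h j j') := by
  symm
  rw [Finset.sum_mul]
  apply Finset.sum_congr rfl; intro i _
  rw [Finset.sum_mul]
  apply Finset.sum_congr rfl; intro i' _
  rw [Finset.mul_sum]
  apply Finset.sum_congr rfl; intro j _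
  rw [Finset.mul_sum]

lemma sum_swap5 {K : Type*} (s : Finset K) (f : A → A → B → B → K → ℝ) :
    ∑ i : A, ∑ i' : A, ∑ j : B, ∑ j' : B, ∑ k ∈ s, f i i' j j' k
      = ∑ k ∈ s, ∑ i : A, ∑ i' : A, ∑ j : B, ∑ j' : B, f i i' j j' k := by
  calc ∑ i : A, ∑ i' : A, ∑ j : B, ∑ j' : B, ∑ k ∈ s, f i i' j j' k
      = ∑ i : A, ∑ i' : A, ∑ j : B, ∑ k ∈ s, ∑ j' : B, f i i' j j' k := by
        apply Finset.sum_congr rfl; intro i _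
        apply Finset.sum_congr rfl; intro i' _
        apply Finset.sum_congr rfl; intro j _
        exact Finset.sum_comm
    _ = ∑ i : A, ∑ i' : A, ∑ k ∈ s, ∑ j : B, ∑ j' : B, f i i' j j' k := by
        apply Finset.sum_congr rfl; intro i _
        apply Finset.sum_congr rfl; intro i' _
        exact Finset.sum_comm
    _ = ∑ i : A, ∑ k ∈ s, ∑ i' : A, ∑ j : B, ∑ j' : B, f i i' j j' k := by
        apply Finset.sum_congr rfl; intro i _
        exact Finset.sum_comm
    _ = ∑ k ∈ s, ∑ i : A, ∑ i' : A, ∑ j : B, ∑ j' : B, f i i' j j' k := Finset.sum_comm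

end Sum4

/-- For the multi-cut construction with pairwise independent lossy rounds
`F_{m₀}, …, F_n` (mutually independent) composed with a 4-wise independent phase function,
the expected squared Frobenius norm of `T Tᵀ` across any cut `X` with `1 ≤ |X| ≤ n/2`
is at most `5 n 2^{2n - |X|}`. -/
theorem statement1
    (n m₀ : ℕ) (hn : 1 ≤ n) (hm₀ : 1 ≤ m₀) (hm₀n : m₀ ≤ n)
    (Ω : Type*) [Fintype Ω] (p : Ω → ℝ)
    (hp0 : ∀ ω, 0 ≤ p ω) (hp1 : ∑ ω, p ω = 1)
    (F : ∀ m : ℕ, Ω → (Fin m → Bool) → (Fin m → Bool))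
    (Hf : Ω → (Fin n → Bool) → Bool)
    -- each `F m` (for `m₀ ≤ m ≤ n`) is a pairwise independent random function
    (hFpair : ∀ m, m₀ ≤ m → m ≤ n → ∀ x y : Fin m → Bool, x ≠ y →
      ∀ a b : Fin m → Bool,
        pr p (fun ω => F m ω x = a ∧ F m ω y = b) = ((1 : ℝ) / 2 ^ m) ^ 2)
    -- `Hf` comes from a 4-wise independent family with a uniformly random key
    (hH4 : ∀ (s : Finset (Fin n → Bool)) (b : (Fin n → Bool) → Bool), s.card ≤ 4 →
      pr p (fun ω => ∀ u ∈ s, Hf ω u = b u) = ((1 : ℝ) / 2) ^ s.card)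
    -- `F_{m₀}, …, F_n, Hf` are mutually independent
    (hInd : ∀ (g : ∀ m : ℕ, (Fin m → Bool) → (Fin m → Bool))
        (hh : (Fin n → Bool) → Bool),
      pr p (fun ω => (∀ m ∈ Finset.Icc m₀ n, F m ω = g m) ∧ Hf ω = hh)
        = (∏ m ∈ Finset.Icc m₀ n, pr p (fun ω => F m ω = g m))
            * pr p (fun ω => Hf ω = hh))
    (X : Finset (Fin n)) (hX1 : 1 ≤ X.card) (hX2 : 2 * X.card ≤ n)
    (T : Ω → Matrix ({t : Fin n // t ∈ X} → Bool) ({t : Fin n // t ∉ X} → Bool) ℝ)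
    (hT : ∀ ω i j,
      T ω i j =
        if Hf ω (rRec n (fun m => F m ω) m₀ (mergeCut X i j)) then (-1 : ℝ) else 1) :
    ∑ ω, p ω * frobSq (T ω * (T ω)ᵀ) ≤ 5 * (n : ℝ) * 2 ^ (2 * n - X.card) := by
  classical
  have hsgn : ∀ ω i j, T ω i j
      = sgn (Hf ω (rRec n (fun m => F m ω) m₀ (mergeCut X i j))) := by
    intro ω i j
    rw [hT ω i j]
    rfl
  set N := n + 1 - m₀ with hN
  set w : ℕ → ℝ := fun k => (1:ℝ)/2^(m₀+k) with hw
  have hw0 : ∀ k, 0 ≤ w k := by intro k; rw [hw]; positivity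
  set sX : ℕ → Finset {t : Fin n // t ∈ X} :=
    fun k => Finset.univ.filter (fun t => m₀ + k ≤ (t.1 : ℕ)) with hsX
  set sJ : ℕ → Finset {t : Fin n // t ∉ X} :=
    fun k => Finset.univ.filter (fun t => m₀ + k ≤ (t.1 : ℕ)) with hsJ
  -- Step A: expansion of the Frobenius norm
  have expand : ∑ ω, p ω * frobSq (T ω * (T ω)ᵀ)
      = ∑ i : {t : Fin n // t ∈ X} → Bool, ∑ i' : {t : Fin n // t ∈ X} → Bool,
          ∑ j : {t : Fin n // t ∉ X} → Bool, ∑ j' : {t : Fin n // t ∉ X} → Bool,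
          ∑ ω, p ω * (T ω i j * T ω i' j * (T ω i j' * T ω i' j')) := by
    have hpoint : ∀ ω, p ω * frobSq (T ω * (T ω)ᵀ)
        = ∑ i : {t : Fin n // t ∈ X} → Bool, ∑ i' : {t : Fin n // t ∈ X} → Bool,
            ∑ j : {t : Fin n // t ∉ X} → Bool, ∑ j' : {t : Fin n // t ∉ X} → Bool,
            p ω * (T ω i j * T ω i' j * (T ω i j' * T ω i' j')) := by
      intro ω
      unfold frobSq
      rw [Finset.mul_sum]
      apply Finset.sum_congr rfl; intro i _
      rw [Finset.mul_sum]
      apply Finset.sum_congr rfl; intro i' _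
      rw [Matrix.mul_apply]
      simp only [Matrix.transpose_apply]
      rw [pow_two, Finset.sum_mul_sum]
      rw [Finset.mul_sum]
      apply Finset.sum_congr rfl; intro j _
      rw [Finset.mul_sum]
    rw [Finset.sum_congr rfl (fun ω _ => hpoint ω)]
    rw [Finset.sum_comm]
    apply Finset.sum_congr rfl; intro i _
    rw [Finset.sum_comm]
    apply Finset.sum_congr rfl; intro i' _
    rw [Finset.sum_comm]
    apply Finset.sum_congr rfl; intro j _
    rw [Finset.sum_comm]
  -- Step B: per-tuple bound
  have tuple_bound : ∀ (i i' : {t : Fin n // t ∈ X} → Bool)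
      (j j' : {t : Fin n // t ∉ X} → Bool),
      (∑ ω, p ω * (T ω i j * T ω i' j * (T ω i j' * T ω i' j')))
        ≤ ind (i = i' ∨ j = j')
          + (∑ k ∈ Finset.range N, ind (∀ t ∈ sX k, i t = i' t) * w k)
          + (∑ k ∈ Finset.range N, ind (∀ t ∈ sJ k, j t = j' t) * w k)
          + (∑ k ∈ Finset.range N,
              (ind (∀ t ∈ sX k, i t = i' t) * ind (∀ t ∈ sJ k, j t = j' t)) * w k) := by
    intro i i' j j'
    have hn2 : (0:ℝ) ≤ ∑ k ∈ Finset.range N, ind (∀ t ∈ sX k, i t = i' t) * w k :=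
      Finset.sum_nonneg (fun k _ => mul_nonneg (ind_nonneg _) (hw0 k))
    have hn3 : (0:ℝ) ≤ ∑ k ∈ Finset.range N, ind (∀ t ∈ sJ k, j t = j' t) * w k :=
      Finset.sum_nonneg (fun k _ => mul_nonneg (ind_nonneg _) (hw0 k))
    have hn4 : (0:ℝ) ≤ ∑ k ∈ Finset.range N,
        (ind (∀ t ∈ sX k, i t = i' t) * ind (∀ t ∈ sJ k, j t = j' t)) * w k :=
      Finset.sum_nonneg (fun k _ =>
        mul_nonneg (mul_nonneg (ind_nonneg _) (ind_nonneg _)) (hw0 k))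
    by_cases hd : i = i' ∨ j = j'
    · have hS1 : (∑ ω, p ω * (T ω i j * T ω i' j * (T ω i j' * T ω i' j'))) ≤ 1 := by
        rw [← hp1]
        apply Finset.sum_le_sum
        intro ω _
        calc p ω * (T ω i j * T ω i' j * (T ω i j' * T ω i' j'))
            ≤ p ω * 1 := by
              apply mul_le_mul_of_nonneg_left _ (hp0 ω)
              rw [hsgn ω i j, hsgn ω i' j, hsgn ω i j', hsgn ω i' j']
              exact sgn_prod4_le_one' _ _ _ _
          _ = p ω := mul_one _
      rw [ind_of hd]
      linarith
    · push_neg at hd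
      obtain ⟨hii, hjj⟩ := hd
      have hne12 : mergeCut X i j ≠ mergeCut X i' j :=
        fun h => hii (mergeCut_inj1 X i i' j j h)
      have hne13 : mergeCut X i j ≠ mergeCut X i j' :=
        fun h => hjj (mergeCut_inj2 X i i j j' h)
      have hne14 : mergeCut X i j ≠ mergeCut X i' j' :=
        fun h => hii (mergeCut_inj1 X i i' j j' h)
      have hSfour : (∑ ω, p ω * (T ω i j * T ω i' j * (T ω i j' * T ω i' j')))
          = ∑ ω, p ω * (sgn (Hf ω (rRec n (fun m => F m ω) m₀ (mergeCut X i j)))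
              * sgn (Hf ω (rRec n (fun m => F m ω) m₀ (mergeCut X i' j)))
              * sgn (Hf ω (rRec n (fun m => F m ω) m₀ (mergeCut X i j')))
              * sgn (Hf ω (rRec n (fun m => F m ω) m₀ (mergeCut X i' j')))) := by
        apply Finset.sum_congr rfl; intro ω _
        rw [hsgn ω i j, hsgn ω i' j, hsgn ω i j', hsgn ω i' j']; ring
      rw [hSfour]
      have h4 := four_point_bound n m₀ hm₀n Ω p hp0 hp1 F Hf hH4 hInd
        (mergeCut X i j) (mergeCut X i' j) (mergeCut X i j') (mergeCut X i' j')
      have hc12 := collision_bound n m₀ hm₀n Ω p hp0 hp1 F Hf hFpair hInd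
        (mergeCut X i j) (mergeCut X i' j) hne12
      have hc13 := collision_bound n m₀ hm₀n Ω p hp0 hp1 F Hf hFpair hInd
        (mergeCut X i j) (mergeCut X i j') hne13
      have hc14 := collision_bound n m₀ hm₀n Ω p hp0 hp1 F Hf hFpair hInd
        (mergeCut X i j) (mergeCut X i' j') hne14
      have hr12 : (∑ k ∈ Finset.range (n + 1 - m₀),
            ind (∀ t : Fin n, m₀ + k ≤ (t : ℕ) → mergeCut X i j t = mergeCut X i' j t)
              * ((1:ℝ) / 2 ^ (m₀ + k)))
          = ∑ k ∈ Finset.range N, ind (∀ t ∈ sX k, i t = i' t) * w k := by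
        apply Finset.sum_congr rfl; intro k _
        rw [ind_congr (agree_iff_X X (m₀+k) i i' j)]
      have hr13 : (∑ k ∈ Finset.range (n + 1 - m₀),
            ind (∀ t : Fin n, m₀ + k ≤ (t : ℕ) → mergeCut X i j t = mergeCut X i j' t)
              * ((1:ℝ) / 2 ^ (m₀ + k)))
          = ∑ k ∈ Finset.range N, ind (∀ t ∈ sJ k, j t = j' t) * w k := by
        apply Finset.sum_congr rfl; intro k _
        rw [ind_congr (agree_iff_J X (m₀+k) i j j')]
      have hr14 : (∑ k ∈ Finset.range (n + 1 - m₀),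
            ind (∀ t : Fin n, m₀ + k ≤ (t : ℕ) → mergeCut X i j t = mergeCut X i' j' t)
              * ((1:ℝ) / 2 ^ (m₀ + k)))
          = ∑ k ∈ Finset.range N,
              (ind (∀ t ∈ sX k, i t = i' t) * ind (∀ t ∈ sJ k, j t = j' t)) * w k := by
        apply Finset.sum_congr rfl; intro k _
        rw [ind_congr (agree_iff_XJ X (m₀+k) i i' j j'), ind_and_mul]
      have hind0 := ind_nonneg (i = i' ∨ j = j')
      rw [hr12] at hc12
      rw [hr13] at hc13
      rw [hr14] at hc14
      linarith
  -- Step C: counting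
  have hmXn : X.card ≤ n := by omega
  have hcardI : (Fintype.card ({t : Fin n // t ∈ X} → Bool) : ℝ) = 2 ^ X.card := by
    rw [Fintype.card_fun, Fintype.card_coe]
    push_cast
    simp
  have hcardJc : Fintype.card {t : Fin n // t ∉ X} = n - X.card := by
    rw [Fintype.card_subtype_compl, Fintype.card_fin, Fintype.card_coe]
  have hcardJ : (Fintype.card ({t : Fin n // t ∉ X} → Bool) : ℝ) = 2 ^ (n - X.card) := by
    rw [Fintype.card_fun, hcardJc]
    push_cast
    simp
  have hkey : ∀ k, (X.card - (sX k).card) + ((n - X.card) - (sJ k).card) ≤ m₀ + k := by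
    intro k
    have h1 : (sX k).card
        + (Finset.univ.filter (fun t : {t : Fin n // t ∈ X} => ¬ (m₀ + k ≤ (t.1 : ℕ)))).card
        = X.card := by
      rw [hsX]
      rw [Finset.card_filter_add_card_filter_not]
      rw [Finset.card_univ, Fintype.card_coe]
    have h2 : (sJ k).card
        + (Finset.univ.filter (fun t : {t : Fin n // t ∉ X} => ¬ (m₀ + k ≤ (t.1 : ℕ)))).card
        = n - X.card := by
      rw [hsJ]
      rw [Finset.card_filter_add_card_filter_not]
      rw [Finset.card_univ, hcardJc]
    have h3 := low_card_bound X (m₀ + k)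
    omega
  have hcntX : ∀ k, (∑ i : {t : Fin n // t ∈ X} → Bool, ∑ i' : {t : Fin n // t ∈ X} → Bool,
      ind (∀ t ∈ sX k, i t = i' t)) = (2:ℝ) ^ X.card * 2 ^ (X.card - (sX k).card) := by
    intro k
    rw [count_agree_pairs (sX k), Fintype.card_coe]
  have hcntJ : ∀ k, (∑ j : {t : Fin n // t ∉ X} → Bool, ∑ j' : {t : Fin n // t ∉ X} → Bool,
      ind (∀ t ∈ sJ k, j t = j' t)) = (2:ℝ) ^ (n - X.card) * 2 ^ ((n - X.card) - (sJ k).card) := by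
    intro k
    rw [count_agree_pairs (sJ k), hcardJc]
  have hE2 : ((2:ℝ) ^ X.card) * ((2:ℝ) ^ (n - X.card) * (2:ℝ) ^ (n - X.card))
      = 2 ^ (2 * n - X.card) := by
    rw [← pow_add, ← pow_add]
    congr 1
    omega
  have hE2' : ((2:ℝ) ^ X.card * (2:ℝ) ^ X.card) * ((2:ℝ) ^ (n - X.card))
      ≤ 2 ^ (2 * n - X.card) := by
    rw [← pow_add, ← pow_add]
    apply pow_le_pow_right₀ one_le_two
    omega
  have hE2'' : ((2:ℝ) ^ X.card) * ((2:ℝ) ^ (n - X.card)) ≤ 2 ^ (2 * n - X.card) := by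
    rw [← pow_add]
    apply pow_le_pow_right₀ one_le_two
    omega
  have hE2nonneg : (0:ℝ) ≤ 2 ^ (2 * n - X.card) := by positivity
  have hNn : ((N:ℕ) : ℝ) ≤ (n : ℝ) := by
    rw [hN]
    push_cast
    have : n + 1 - m₀ ≤ n := by omega
    exact_mod_cast Nat.cast_le.mpr this
  -- diagonal term
  have hdiagI : (∑ i : {t : Fin n // t ∈ X} → Bool, ∑ i' : {t : Fin n // t ∈ X} → Bool,
      ind (i = i')) = (Fintype.card ({t : Fin n // t ∈ X} → Bool) : ℝ) := by
    rw [Finset.sum_congr rfl (fun i _ => sum_ind_eq i), Finset.sum_const, Finset.card_univ,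
      nsmul_eq_mul, mul_one]
  have hdiagJ : (∑ j : {t : Fin n // t ∉ X} → Bool, ∑ j' : {t : Fin n // t ∉ X} → Bool,
      ind (j = j')) = (Fintype.card ({t : Fin n // t ∉ X} → Bool) : ℝ) := by
    rw [Finset.sum_congr rfl (fun j _ => sum_ind_eq j), Finset.sum_const, Finset.card_univ,
      nsmul_eq_mul, mul_one]
  have hD : (∑ i : {t : Fin n // t ∈ X} → Bool, ∑ i' : {t : Fin n // t ∈ X} → Bool,
        ∑ j : {t : Fin n // t ∉ X} → Bool, ∑ j' : {t : Fin n // t ∉ X} → Bool,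
        ind (i = i' ∨ j = j'))
      ≤ 2 * 2 ^ (2 * n - X.card) := by
    calc ∑ i : {t : Fin n // t ∈ X} → Bool, ∑ i' : {t : Fin n // t ∈ X} → Bool,
          ∑ j : {t : Fin n // t ∉ X} → Bool, ∑ j' : {t : Fin n // t ∉ X} → Bool,
          ind (i = i' ∨ j = j')
        ≤ ∑ i : {t : Fin n // t ∈ X} → Bool, ∑ i' : {t : Fin n // t ∈ X} → Bool,
          ∑ j : {t : Fin n // t ∉ X} → Bool, ∑ j' : {t : Fin n // t ∉ X} → Bool,
          (ind (i = i') + ind (j = j')) := by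
          apply Finset.sum_le_sum; intro i _
          apply Finset.sum_le_sum; intro i' _
          apply Finset.sum_le_sum; intro j _
          apply Finset.sum_le_sum; intro j' _
          exact ind_or_le _ _
      _ = (∑ i : {t : Fin n // t ∈ X} → Bool, ∑ i' : {t : Fin n // t ∈ X} → Bool,
            ∑ j : {t : Fin n // t ∉ X} → Bool, ∑ j' : {t : Fin n // t ∉ X} → Bool,
            ind (i = i'))
          + (∑ i : {t : Fin n // t ∈ X} → Bool, ∑ i' : {t : Fin n // t ∈ X} → Bool,
            ∑ j : {t : Fin n // t ∉ X} → Bool, ∑ j' : {t : Fin n // t ∉ X} → Bool,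
            ind (j = j')) := by
          simp only [Finset.sum_add_distrib]
      _ = (∑ i : {t : Fin n // t ∈ X} → Bool, ∑ i' : {t : Fin n // t ∈ X} → Bool, ind (i = i'))
            * ((Fintype.card ({t : Fin n // t ∉ X} → Bool) : ℝ)
              * (Fintype.card ({t : Fin n // t ∉ X} → Bool) : ℝ))
          + ((Fintype.card ({t : Fin n // t ∈ X} → Bool) : ℝ)
              * (Fintype.card ({t : Fin n // t ∈ X} → Bool) : ℝ))
            * (∑ j : {t : Fin n // t ∉ X} → Bool, ∑ j' : {t : Fin n // t ∉ X} → Bool,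
              ind (j = j')) := by
          rw [sum4_left (B := {t : Fin n // t ∉ X} → Bool)
            (fun i i' : {t : Fin n // t ∈ X} → Bool => ind (i = i')),
            sum4_right (A := {t : Fin n // t ∈ X} → Bool)
            (fun j j' : {t : Fin n // t ∉ X} → Bool => ind (j = j'))]
      _ ≤ 2 * 2 ^ (2 * n - X.card) := by
          rw [hdiagI, hdiagJ, hcardI, hcardJ]
          have e1 : (2:ℝ) ^ X.card * ((2:ℝ) ^ (n - X.card) * (2:ℝ) ^ (n - X.card))
              = 2 ^ (2 * n - X.card) := hE2
          have e2 : ((2:ℝ) ^ X.card * (2:ℝ) ^ X.card) * ((2:ℝ) ^ (n - X.card))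
              ≤ 2 ^ (2 * n - X.card) := hE2'
          linarith
  -- T2 term
  have hT2 : (∑ i : {t : Fin n // t ∈ X} → Bool, ∑ i' : {t : Fin n // t ∈ X} → Bool,
        ∑ j : {t : Fin n // t ∉ X} → Bool, ∑ j' : {t : Fin n // t ∉ X} → Bool,
        ∑ k ∈ Finset.range N, ind (∀ t ∈ sX k, i t = i' t) * w k)
      ≤ (n:ℝ) * 2 ^ (2 * n - X.card) := by
    rw [sum4_left (B := {t : Fin n // t ∉ X} → Bool)
      (fun i i' : {t : Fin n // t ∈ X} → Bool =>
        ∑ k ∈ Finset.range N, ind (∀ t ∈ sX k, i t = i' t) * w k)]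
    have hin : (∑ i : {t : Fin n // t ∈ X} → Bool, ∑ i' : {t : Fin n // t ∈ X} → Bool,
        ∑ k ∈ Finset.range N, ind (∀ t ∈ sX k, i t = i' t) * w k)
        ≤ (N : ℝ) * 2 ^ X.card := by
      calc ∑ i : {t : Fin n // t ∈ X} → Bool, ∑ i' : {t : Fin n // t ∈ X} → Bool,
            ∑ k ∈ Finset.range N, ind (∀ t ∈ sX k, i t = i' t) * w k
          = ∑ k ∈ Finset.range N, ∑ i : {t : Fin n // t ∈ X} → Bool,
              ∑ i' : {t : Fin n // t ∈ X} → Bool, ind (∀ t ∈ sX k, i t = i' t) * w k := by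
            rw [Finset.sum_congr rfl (fun i (_ : i ∈ Finset.univ) => Finset.sum_comm)]
            rw [Finset.sum_comm]
        _ ≤ ∑ k ∈ Finset.range N, (2:ℝ) ^ X.card := by
            apply Finset.sum_le_sum
            intro k _
            have heq : (∑ i : {t : Fin n // t ∈ X} → Bool,
                ∑ i' : {t : Fin n // t ∈ X} → Bool, ind (∀ t ∈ sX k, i t = i' t) * w k)
                = ((2:ℝ) ^ X.card * 2 ^ (X.card - (sX k).card)) * w k := by
              rw [← hcntX k]
              rw [Finset.sum_congr rfl (fun i (_ : i ∈ Finset.univ) =>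
                show (∑ i' : {t : Fin n // t ∈ X} → Bool, ind (∀ t ∈ sX k, i t = i' t) * w k)
                  = (∑ i' : {t : Fin n // t ∈ X} → Bool, ind (∀ t ∈ sX k, i t = i' t)) * w k
                from by rw [← Finset.sum_mul])]
              rw [← Finset.sum_mul]
            rw [heq]
            have hb : w k * (2:ℝ) ^ (X.card - (sX k).card) ≤ 1 := by
              rw [hw]
              exact weight_bound (m₀ + k) _ (by have := hkey k; omega)
            calc ((2:ℝ) ^ X.card * 2 ^ (X.card - (sX k).card)) * w k
                = (2:ℝ) ^ X.card * (w k * 2 ^ (X.card - (sX k).card)) := by ring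
              _ ≤ (2:ℝ) ^ X.card * 1 := by
                  apply mul_le_mul_of_nonneg_left hb (by positivity)
              _ = (2:ℝ) ^ X.card := mul_one _
        _ = (N : ℝ) * 2 ^ X.card := by
            rw [Finset.sum_const, Finset.card_range, nsmul_eq_mul]
    calc (∑ i : {t : Fin n // t ∈ X} → Bool, ∑ i' : {t : Fin n // t ∈ X} → Bool,
          ∑ k ∈ Finset.range N, ind (∀ t ∈ sX k, i t = i' t) * w k)
          * ((Fintype.card ({t : Fin n // t ∉ X} → Bool) : ℝ)
            * (Fintype.card ({t : Fin n // t ∉ X} → Bool) : ℝ))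
        ≤ ((N : ℝ) * 2 ^ X.card)
          * ((Fintype.card ({t : Fin n // t ∉ X} → Bool) : ℝ)
            * (Fintype.card ({t : Fin n // t ∉ X} → Bool) : ℝ)) := by
          apply mul_le_mul_of_nonneg_right hin
          positivity
      _ = (N : ℝ) * ((2:ℝ) ^ X.card * ((2:ℝ) ^ (n - X.card) * (2:ℝ) ^ (n - X.card))) := by
          rw [hcardJ]; ring
      _ = (N : ℝ) * 2 ^ (2 * n - X.card) := by rw [hE2]
      _ ≤ (n:ℝ) * 2 ^ (2 * n - X.card) := by
          apply mul_le_mul_of_nonneg_right hNn hE2nonneg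
  -- T3 term
  have hT3 : (∑ i : {t : Fin n // t ∈ X} → Bool, ∑ i' : {t : Fin n // t ∈ X} → Bool,
        ∑ j : {t : Fin n // t ∉ X} → Bool, ∑ j' : {t : Fin n // t ∉ X} → Bool,
        ∑ k ∈ Finset.range N, ind (∀ t ∈ sJ k, j t = j' t) * w k)
      ≤ (n:ℝ) * 2 ^ (2 * n - X.card) := by
    rw [sum4_right (A := {t : Fin n // t ∈ X} → Bool)
      (fun j j' : {t : Fin n // t ∉ X} → Bool =>
        ∑ k ∈ Finset.range N, ind (∀ t ∈ sJ k, j t = j' t) * w k)]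
    have hin : (∑ j : {t : Fin n // t ∉ X} → Bool, ∑ j' : {t : Fin n // t ∉ X} → Bool,
        ∑ k ∈ Finset.range N, ind (∀ t ∈ sJ k, j t = j' t) * w k)
        ≤ (N : ℝ) * 2 ^ (n - X.card) := by
      calc ∑ j : {t : Fin n // t ∉ X} → Bool, ∑ j' : {t : Fin n // t ∉ X} → Bool,
            ∑ k ∈ Finset.range N, ind (∀ t ∈ sJ k, j t = j' t) * w k
          = ∑ k ∈ Finset.range N, ∑ j : {t : Fin n // t ∉ X} → Bool,
              ∑ j' : {t : Fin n // t ∉ X} → Bool, ind (∀ t ∈ sJ k, j t = j' t) * w k := by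
            rw [Finset.sum_congr rfl (fun j (_ : j ∈ Finset.univ) => Finset.sum_comm)]
            rw [Finset.sum_comm]
        _ ≤ ∑ k ∈ Finset.range N, (2:ℝ) ^ (n - X.card) := by
            apply Finset.sum_le_sum
            intro k _
            have heq : (∑ j : {t : Fin n // t ∉ X} → Bool,
                ∑ j' : {t : Fin n // t ∉ X} → Bool, ind (∀ t ∈ sJ k, j t = j' t) * w k)
                = ((2:ℝ) ^ (n - X.card) * 2 ^ ((n - X.card) - (sJ k).card)) * w k := by
              rw [← hcntJ k]
              rw [Finset.sum_congr rfl (fun j (_ : j ∈ Finset.univ) =>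
                show (∑ j' : {t : Fin n // t ∉ X} → Bool, ind (∀ t ∈ sJ k, j t = j' t) * w k)
                  = (∑ j' : {t : Fin n // t ∉ X} → Bool, ind (∀ t ∈ sJ k, j t = j' t)) * w k
                from by rw [← Finset.sum_mul])]
              rw [← Finset.sum_mul]
            rw [heq]
            have hb : w k * (2:ℝ) ^ ((n - X.card) - (sJ k).card) ≤ 1 := by
              rw [hw]
              exact weight_bound (m₀ + k) _ (by have := hkey k; omega)
            calc ((2:ℝ) ^ (n - X.card) * 2 ^ ((n - X.card) - (sJ k).card)) * w k
                = (2:ℝ) ^ (n - X.card) * (w k * 2 ^ ((n - X.card) - (sJ k).card)) := by ring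
              _ ≤ (2:ℝ) ^ (n - X.card) * 1 := by
                  apply mul_le_mul_of_nonneg_left hb (by positivity)
              _ = (2:ℝ) ^ (n - X.card) := mul_one _
        _ = (N : ℝ) * 2 ^ (n - X.card) := by
            rw [Finset.sum_const, Finset.card_range, nsmul_eq_mul]
    calc ((Fintype.card ({t : Fin n // t ∈ X} → Bool) : ℝ)
            * (Fintype.card ({t : Fin n // t ∈ X} → Bool) : ℝ))
          * (∑ j : {t : Fin n // t ∉ X} → Bool, ∑ j' : {t : Fin n // t ∉ X} → Bool,
            ∑ k ∈ Finset.range N, ind (∀ t ∈ sJ k, j t = j' t) * w k)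
        ≤ ((Fintype.card ({t : Fin n // t ∈ X} → Bool) : ℝ)
            * (Fintype.card ({t : Fin n // t ∈ X} → Bool) : ℝ))
          * ((N : ℝ) * 2 ^ (n - X.card)) := by
          apply mul_le_mul_of_nonneg_left hin
          positivity
      _ = (N : ℝ) * (((2:ℝ) ^ X.card * (2:ℝ) ^ X.card) * ((2:ℝ) ^ (n - X.card))) := by
          rw [hcardI]; ring
      _ ≤ (N : ℝ) * 2 ^ (2 * n - X.card) := by
          apply mul_le_mul_of_nonneg_left hE2' (Nat.cast_nonneg N)
      _ ≤ (n:ℝ) * 2 ^ (2 * n - X.card) := by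
          apply mul_le_mul_of_nonneg_right hNn hE2nonneg
  -- T4 term
  have hT4 : (∑ i : {t : Fin n // t ∈ X} → Bool, ∑ i' : {t : Fin n // t ∈ X} → Bool,
        ∑ j : {t : Fin n // t ∉ X} → Bool, ∑ j' : {t : Fin n // t ∉ X} → Bool,
        ∑ k ∈ Finset.range N,
          (ind (∀ t ∈ sX k, i t = i' t) * ind (∀ t ∈ sJ k, j t = j' t)) * w k)
      ≤ (n:ℝ) * 2 ^ (2 * n - X.card) := by
    rw [sum_swap5 (Finset.range N)
      (fun (i i' : {t : Fin n // t ∈ X} → Bool) (j j' : {t : Fin n // t ∉ X} → Bool) k =>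
        (ind (∀ t ∈ sX k, i t = i' t) * ind (∀ t ∈ sJ k, j t = j' t)) * w k)]
    calc ∑ k ∈ Finset.range N, ∑ i : {t : Fin n // t ∈ X} → Bool,
          ∑ i' : {t : Fin n // t ∈ X} → Bool, ∑ j : {t : Fin n // t ∉ X} → Bool,
          ∑ j' : {t : Fin n // t ∉ X} → Bool,
          (ind (∀ t ∈ sX k, i t = i' t) * ind (∀ t ∈ sJ k, j t = j' t)) * w k
        ≤ ∑ k ∈ Finset.range N, (2:ℝ) ^ X.card * (2:ℝ) ^ (n - X.card) := by
          apply Finset.sum_le_sum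
          intro k _
          have hfac : (∑ i : {t : Fin n // t ∈ X} → Bool,
              ∑ i' : {t : Fin n // t ∈ X} → Bool, ∑ j : {t : Fin n // t ∉ X} → Bool,
              ∑ j' : {t : Fin n // t ∉ X} → Bool,
              (ind (∀ t ∈ sX k, i t = i' t) * ind (∀ t ∈ sJ k, j t = j' t)) * w k)
              = (∑ i : {t : Fin n // t ∈ X} → Bool, ∑ i' : {t : Fin n // t ∈ X} → Bool,
                  ind (∀ t ∈ sX k, i t = i' t))
                * (∑ j : {t : Fin n // t ∉ X} → Bool, ∑ j' : {t : Fin n // t ∉ X} → Bool,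
                  ind (∀ t ∈ sJ k, j t = j' t) * w k) := by
            rw [← sum4_fact (fun i i' : {t : Fin n // t ∈ X} → Bool => ind (∀ t ∈ sX k, i t = i' t))
              (fun j j' : {t : Fin n // t ∉ X} → Bool => ind (∀ t ∈ sJ k, j t = j' t) * w k)]
            apply Finset.sum_congr rfl; intro i _
            apply Finset.sum_congr rfl; intro i' _
            apply Finset.sum_congr rfl; intro j _
            apply Finset.sum_congr rfl; intro j' _
            ring
          rw [hfac]
          have hinJ : (∑ j : {t : Fin n // t ∉ X} → Bool, ∑ j' : {t : Fin n // t ∉ X} → Bool,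
              ind (∀ t ∈ sJ k, j t = j' t) * w k)
              = ((2:ℝ) ^ (n - X.card) * 2 ^ ((n - X.card) - (sJ k).card)) * w k := by
            rw [← hcntJ k]
            rw [Finset.sum_congr rfl (fun j (_ : j ∈ Finset.univ) =>
              show (∑ j' : {t : Fin n // t ∉ X} → Bool, ind (∀ t ∈ sJ k, j t = j' t) * w k)
                = (∑ j' : {t : Fin n // t ∉ X} → Bool, ind (∀ t ∈ sJ k, j t = j' t)) * w k
              from by rw [← Finset.sum_mul])]
            rw [← Finset.sum_mul]
          rw [hinJ, hcntX k]
          have hb : w k * ((2:ℝ) ^ (X.card - (sX k).card)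
              * (2:ℝ) ^ ((n - X.card) - (sJ k).card)) ≤ 1 := by
            rw [← pow_add, hw]
            exact weight_bound (m₀ + k) _ (hkey k)
          calc ((2:ℝ) ^ X.card * 2 ^ (X.card - (sX k).card))
                * (((2:ℝ) ^ (n - X.card) * 2 ^ ((n - X.card) - (sJ k).card)) * w k)
              = ((2:ℝ) ^ X.card * (2:ℝ) ^ (n - X.card))
                * (w k * ((2:ℝ) ^ (X.card - (sX k).card)
                  * (2:ℝ) ^ ((n - X.card) - (sJ k).card))) := by ring
            _ ≤ ((2:ℝ) ^ X.card * (2:ℝ) ^ (n - X.card)) * 1 := by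
                apply mul_le_mul_of_nonneg_left hb (by positivity)
            _ = (2:ℝ) ^ X.card * (2:ℝ) ^ (n - X.card) := mul_one _
      _ = (N : ℝ) * ((2:ℝ) ^ X.card * (2:ℝ) ^ (n - X.card)) := by
          rw [Finset.sum_const, Finset.card_range, nsmul_eq_mul]
      _ ≤ (N : ℝ) * 2 ^ (2 * n - X.card) := by
          apply mul_le_mul_of_nonneg_left hE2'' (Nat.cast_nonneg N)
      _ ≤ (n:ℝ) * 2 ^ (2 * n - X.card) := by
          apply mul_le_mul_of_nonneg_right hNn hE2nonneg
  -- final assembly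
  rw [expand]
  have hsplit : (∑ i : {t : Fin n // t ∈ X} → Bool, ∑ i' : {t : Fin n // t ∈ X} → Bool,
        ∑ j : {t : Fin n // t ∉ X} → Bool, ∑ j' : {t : Fin n // t ∉ X} → Bool,
        ∑ ω, p ω * (T ω i j * T ω i' j * (T ω i j' * T ω i' j')))
      ≤ (∑ i : {t : Fin n // t ∈ X} → Bool, ∑ i' : {t : Fin n // t ∈ X} → Bool,
        ∑ j : {t : Fin n // t ∉ X} → Bool, ∑ j' : {t : Fin n // t ∉ X} → Bool,
        (ind (i = i' ∨ j = j')
          + (∑ k ∈ Finset.range N, ind (∀ t ∈ sX k, i t = i' t) * w k)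
          + (∑ k ∈ Finset.range N, ind (∀ t ∈ sJ k, j t = j' t) * w k)
          + (∑ k ∈ Finset.range N,
              (ind (∀ t ∈ sX k, i t = i' t) * ind (∀ t ∈ sJ k, j t = j' t)) * w k))) := by
    apply Finset.sum_le_sum; intro i _
    apply Finset.sum_le_sum; intro i' _
    apply Finset.sum_le_sum; intro j _
    apply Finset.sum_le_sum; intro j' _
    exact tuple_bound i i' j j'
  refine le_trans hsplit ?_
  have hsum4split : (∑ i : {t : Fin n // t ∈ X} → Bool, ∑ i' : {t : Fin n // t ∈ X} → Bool,
        ∑ j : {t : Fin n // t ∉ X} → Bool, ∑ j' : {t : Fin n // t ∉ X} → Bool,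
        (ind (i = i' ∨ j = j')
          + (∑ k ∈ Finset.range N, ind (∀ t ∈ sX k, i t = i' t) * w k)
          + (∑ k ∈ Finset.range N, ind (∀ t ∈ sJ k, j t = j' t) * w k)
          + (∑ k ∈ Finset.range N,
              (ind (∀ t ∈ sX k, i t = i' t) * ind (∀ t ∈ sJ k, j t = j' t)) * w k)))
      = (∑ i : {t : Fin n // t ∈ X} → Bool, ∑ i' : {t : Fin n // t ∈ X} → Bool,
        ∑ j : {t : Fin n // t ∉ X} → Bool, ∑ j' : {t : Fin n // t ∉ X} → Bool,
          ind (i = i' ∨ j = j'))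
        + (∑ i : {t : Fin n // t ∈ X} → Bool, ∑ i' : {t : Fin n // t ∈ X} → Bool,
        ∑ j : {t : Fin n // t ∉ X} → Bool, ∑ j' : {t : Fin n // t ∉ X} → Bool,
          ∑ k ∈ Finset.range N, ind (∀ t ∈ sX k, i t = i' t) * w k)
        + (∑ i : {t : Fin n // t ∈ X} → Bool, ∑ i' : {t : Fin n // t ∈ X} → Bool,
        ∑ j : {t : Fin n // t ∉ X} → Bool, ∑ j' : {t : Fin n // t ∉ X} → Bool,
          ∑ k ∈ Finset.range N, ind (∀ t ∈ sJ k, j t = j' t) * w k)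
        + (∑ i : {t : Fin n // t ∈ X} → Bool, ∑ i' : {t : Fin n // t ∈ X} → Bool,
        ∑ j : {t : Fin n // t ∉ X} → Bool, ∑ j' : {t : Fin n // t ∉ X} → Bool,
          ∑ k ∈ Finset.range N,
            (ind (∀ t ∈ sX k, i t = i' t) * ind (∀ t ∈ sJ k, j t = j' t)) * w k) := by
    simp only [Finset.sum_add_distrib]
  rw [hsum4split]
  have hn1 : (1:ℝ) ≤ (n:ℝ) := by exact_mod_cast hn
  calc (∑ i : {t : Fin n // t ∈ X} → Bool, ∑ i' : {t : Fin n // t ∈ X} → Bool,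
        ∑ j : {t : Fin n // t ∉ X} → Bool, ∑ j' : {t : Fin n // t ∉ X} → Bool,
          ind (i = i' ∨ j = j'))
        + (∑ i : {t : Fin n // t ∈ X} → Bool, ∑ i' : {t : Fin n // t ∈ X} → Bool,
        ∑ j : {t : Fin n // t ∉ X} → Bool, ∑ j' : {t : Fin n // t ∉ X} → Bool,
          ∑ k ∈ Finset.range N, ind (∀ t ∈ sX k, i t = i' t) * w k)
        + (∑ i : {t : Fin n // t ∈ X} → Bool, ∑ i' : {t : Fin n // t ∈ X} → Bool,
        ∑ j : {t : Fin n // t ∉ X} → Bool, ∑ j' : {t : Fin n // t ∉ X} → Bool,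
          ∑ k ∈ Finset.range N, ind (∀ t ∈ sJ k, j t = j' t) * w k)
        + (∑ i : {t : Fin n // t ∈ X} → Bool, ∑ i' : {t : Fin n // t ∈ X} → Bool,
        ∑ j : {t : Fin n // t ∉ X} → Bool, ∑ j' : {t : Fin n // t ∉ X} → Bool,
          ∑ k ∈ Finset.range N,
            (ind (∀ t ∈ sX k, i t = i' t) * ind (∀ t ∈ sJ k, j t = j' t)) * w k)
      ≤ 2 * 2 ^ (2 * n - X.card) + (n:ℝ) * 2 ^ (2 * n - X.card)
        + (n:ℝ) * 2 ^ (2 * n - X.card) + (n:ℝ) * 2 ^ (2 * n - X.card) := by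
        linarith
    _ ≤ 5 * (n : ℝ) * 2 ^ (2 * n - X.card) := by nlinarith
end

section
/- Fix integers n ≥ 1 and 1 ≤ m₀ ≤ n, and arbitrary (deterministic) functions f_m : {0,1}^m → {0,1}^m for m₀ ≤ m ≤ n; define r := r^{m₀} by the downward recursion r^{n+1} = id and r^m(x) = r^{m+1}(f_m(MSB_m(x)) ‖ LSB_{n−m}(x)). Then for every cut position c with m₀ ≤ c ≤ n and every function h : {0,1}^n → {0,1}, the 2^c × 2^{n−c} matrix T with entries T_{ij} = (−1)^{h(r(i‖j))} (for i ∈ {0,1}^c, j ∈ {0,1}^{n−c}) has at most |range(f_c)| distinct rows; in particular its rank over ℝ is at most |range(f_c)|. -/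
open scoped BigOperators Classical
open Matrix

/-- Concatenation `i ‖ j` of a `c`-bit string (most significant part) with an
`(n - c)`-bit string (least significant part) into an `n`-bit string. -/
def concatAt {n : ℕ} (c : ℕ) (i : Fin c → Bool) (j : Fin (n - c) → Bool) : Fin n → Bool :=
  fun t => if ht : (t : ℕ) < c then i ⟨t.1, ht⟩
    else if ht2 : (t : ℕ) - c < n - c then j ⟨t.1 - c, ht2⟩ else false

/-- Prefix analogue of `rStep`: acts on the top-`c` bits only. -/
def prefStep (c : ℕ) (f : ∀ m : ℕ, (Fin m → Bool) → (Fin m → Bool)) (m : ℕ) (h : m ≤ c)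
    (i : Fin c → Bool) : Fin c → Bool :=
  fun t => if ht : (t : ℕ) < m then f m (msb m h i) ⟨t.1, ht⟩ else i t

/-- Prefix analogue of `rRec`. -/
def prefRec (c : ℕ) (f : ∀ m : ℕ, (Fin m → Bool) → (Fin m → Bool)) (m : ℕ)
    (i : Fin c → Bool) : Fin c → Bool :=
  if h : m ≤ c then prefRec c f (m + 1) (prefStep c f m h i) else i
termination_by c + 1 - m
decreasing_by omega

lemma rStep_concat {n : ℕ} (c : ℕ) (f : ∀ m : ℕ, (Fin m → Bool) → (Fin m → Bool))
    (m : ℕ) (hmc : m ≤ c) (hcn : c ≤ n) (i : Fin c → Bool) (j : Fin (n - c) → Bool) :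
    rStep n f m (hmc.trans hcn) (concatAt c i j) = concatAt c (prefStep c f m hmc i) j := by
  have hmsb : msb m (hmc.trans hcn) (concatAt c i j) = msb m hmc i := by
    funext s
    have : (s : ℕ) < c := lt_of_lt_of_le s.2 hmc
    simp [msb, concatAt, this]
  funext t
  by_cases ht : (t : ℕ) < m
  · have htc : (t : ℕ) < c := lt_of_lt_of_le ht hmc
    simp [rStep, concatAt, prefStep, ht, htc, hmsb]
  · by_cases htc : (t : ℕ) < c <;> simp [rStep, concatAt, prefStep, ht, htc]

lemma rRec_concat {n : ℕ} (c : ℕ) (hcn : c ≤ n) (f : ∀ m : ℕ, (Fin m → Bool) → (Fin m → Bool))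
    (m : ℕ) (hmc : m ≤ c) (i : Fin c → Bool) (j : Fin (n - c) → Bool) :
    rRec n f m (concatAt c i j) = rRec n f (c + 1) (concatAt c (prefRec c f m i) j) := by
  rw [rRec, dif_pos (hmc.trans hcn), rStep_concat c f m hmc hcn i j,
    prefRec, dif_pos hmc]
  by_cases h : m + 1 ≤ c
  · exact rRec_concat c hcn f (m + 1) h _ j
  · have hm : m + 1 = c + 1 := by omega
    rw [prefRec, dif_neg (by omega), hm]
termination_by c + 1 - m
decreasing_by omega

lemma prefRec_mem_range (c : ℕ) (f : ∀ m : ℕ, (Fin m → Bool) → (Fin m → Bool))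
    (m : ℕ) (hmc : m ≤ c) (i : Fin c → Bool) :
    ∃ y, f c y = prefRec c f m i := by
  rw [prefRec, dif_pos hmc]
  by_cases h : m + 1 ≤ c
  · exact prefRec_mem_range c f (m + 1) h _
  · have hm : m = c := by omega
    rw [prefRec, dif_neg (by omega)]
    subst hm
    refine ⟨msb m le_rfl i, ?_⟩
    funext t
    simp [prefStep, t.2]
termination_by c + 1 - m
decreasing_by omega

/-- For the deterministic multi-cut recursion and any cut position
`m₀ ≤ c ≤ n`, the sign matrix `T_{ij} = (-1)^{h(r(i ‖ j))}` has at most `|range f_c|`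
distinct rows, and in particular `rank T ≤ |range f_c|` over `ℝ`. -/
theorem statement3
    (n m₀ : ℕ) (hn : 1 ≤ n) (hm₀ : 1 ≤ m₀) (hm₀n : m₀ ≤ n)
    (f : ∀ m : ℕ, (Fin m → Bool) → (Fin m → Bool))
    (c : ℕ) (hc1 : m₀ ≤ c) (hc2 : c ≤ n)
    (h : (Fin n → Bool) → Bool)
    (T : Matrix (Fin c → Bool) (Fin (n - c) → Bool) ℝ)
    (hT : ∀ i j, T i j = if h (rRec n f m₀ (concatAt c i j)) then (-1 : ℝ) else 1) :
    (Finset.univ.image fun i : Fin c → Bool => T i).card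
        ≤ (Finset.univ.image (f c)).card ∧
      T.rank ≤ (Finset.univ.image (f c)).card := by
  set R : (Fin c → Bool) → (Fin (n - c) → Bool) → ℝ :=
    fun p j => if h (rRec n f (c + 1) (concatAt c p j)) then (-1 : ℝ) else 1 with hR
  have hrow : ∀ i : Fin c → Bool, T i = R (prefRec c f m₀ i) := by
    intro i
    funext j
    rw [hT i j, rRec_concat c hc2 f m₀ hc1 i j]
  have key : (Finset.univ.image fun i : Fin c → Bool => T i).card
      ≤ (Finset.univ.image (f c)).card := by
    have h1 : (Finset.univ.image fun i : Fin c → Bool => T i)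
        ⊆ (Finset.univ.image (f c)).image R := by
      intro x hx
      simp only [Finset.mem_image, Finset.mem_univ, true_and] at hx ⊢
      obtain ⟨i, rfl⟩ := hx
      obtain ⟨y, hy⟩ := prefRec_mem_range c f m₀ hc1 i
      exact ⟨prefRec c f m₀ i, ⟨y, hy⟩, (hrow i).symm⟩
    calc (Finset.univ.image fun i : Fin c → Bool => T i).card
        ≤ ((Finset.univ.image (f c)).image R).card := Finset.card_le_card h1
      _ ≤ (Finset.univ.image (f c)).card := Finset.card_image_le
  refine ⟨key, ?_⟩
  have hr : T.rank = Module.finrank ℝ (Submodule.span ℝ (Set.range fun i => T i)) := by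
    rw [← T.rank_transpose, Matrix.rank_eq_finrank_span_cols]
    rfl
  rw [hr]
  have hset : (Set.range fun i => T i)
      = ((Finset.univ.image fun i : Fin c → Bool => T i : Finset _) : Set _) := by
    ext x; simp
  rw [hset]
  exact le_trans (finrank_span_finset_le_card _) key
end

section
/- Fix integers n ≥ 1 and 1 ≤ m₀ ≤ n, and arbitrary functions f_m : {0,1}^m → {0,1}^m for m₀ ≤ m ≤ n; define r := r^{m₀} by the downward recursion r^{n+1} = id and r^m(x) = r^{m+1}(f_m(MSB_m(x)) ‖ LSB_{n−m}(x)). For any cut m₀ ≤ c ≤ n, any function h : {0,1}^n → {0,1}, and T the 2^c × 2^{n−c} matrix with T_{ij} = (−1)^{h(r(i‖j))}, the matrix ρ := T·Tᵀ/2^n is positive semidefinite with trace 1 and its von Neumann entropy satisfies S(ρ) ≤ log₂ |range(f_c)|. -/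
open scoped BigOperators Classical
open Matrix

/-- Von Neumann entropy (base 2) of a Hermitian matrix, defined via its eigenvalues;
junk value `0` if the matrix is not Hermitian. -/
noncomputable def vnEntropy {𝕜 : Type*} [RCLike 𝕜] {d : Type*} [Fintype d] [DecidableEq d]
    (ρ : Matrix d d 𝕜) : ℝ :=
  if h : ρ.IsHermitian then -∑ i, h.eigenvalues i * Real.logb 2 (h.eigenvalues i) else 0

lemma rRec_of_le {n m : ℕ} (f : ∀ m : ℕ, (Fin m → Bool) → (Fin m → Bool)) (h : m ≤ n)
    (x : Fin n → Bool) : rRec n f m x = rRec n f (m + 1) (rStep n f m h x) := by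
  rw [rRec, dif_pos h]

lemma rRec_of_gt {n m : ℕ} (f : ∀ m : ℕ, (Fin m → Bool) → (Fin m → Bool)) (h : ¬ m ≤ n)
    (x : Fin n → Bool) : rRec n f m x = x := by
  rw [rRec, dif_neg h]

lemma msb_concatAt {n c m : ℕ} (hm : m ≤ c) (hc : c ≤ n)
    (i : Fin c → Bool) (j : Fin (n - c) → Bool) :
    msb m (hm.trans hc) (concatAt c i j) = msb m hm i := by
  funext s
  have : (s : ℕ) < c := lt_of_lt_of_le s.2 hm
  simp [msb, concatAt, this]

lemma rStep_concatAt {n c m : ℕ} (f : ∀ m : ℕ, (Fin m → Bool) → (Fin m → Bool))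
    (hm : m ≤ c) (hc : c ≤ n) (i : Fin c → Bool) (j : Fin (n - c) → Bool) :
    rStep n f m (hm.trans hc) (concatAt c i j) = concatAt c (rStep c f m hm i) j := by
  funext t
  by_cases h1 : (t : ℕ) < m
  · have h2 : (t : ℕ) < c := lt_of_lt_of_le h1 hm
    simp [rStep, concatAt, h1, h2, msb_concatAt hm hc]
  · by_cases h2 : (t : ℕ) < c
    · simp [rStep, concatAt, h1, h2]
    · simp [rStep, concatAt, h1, h2]

lemma rRec_concatAt {n : ℕ} (c : ℕ) (hc : c ≤ n)
    (f : ∀ m : ℕ, (Fin m → Bool) → (Fin m → Bool)) (m : ℕ) (hm : m ≤ c + 1)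
    (i : Fin c → Bool) (j : Fin (n - c) → Bool) :
    rRec n f m (concatAt c i j) = rRec n f (c + 1) (concatAt c (rRec c f m i) j) := by
  rcases eq_or_lt_of_le hm with h | h
  · subst h
    rw [rRec_of_gt f (by omega) i]
  · have hmc : m ≤ c := by omega
    rw [rRec_of_le f (hmc.trans hc), rStep_concatAt f hmc hc,
      rRec_concatAt c hc f (m + 1) (by omega) _ j, rRec_of_le f hmc]
termination_by c + 1 - m
decreasing_by omega

lemma rRec_mem_range (c : ℕ) (f : ∀ m : ℕ, (Fin m → Bool) → (Fin m → Bool)) (m : ℕ)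
    (hm : m ≤ c) (i : Fin c → Bool) : ∃ y, rRec c f m i = f c y := by
  rcases eq_or_lt_of_le hm with h | h
  · subst h
    rw [rRec_of_le f le_rfl, rRec_of_gt f (by omega)]
    refine ⟨msb m le_rfl i, ?_⟩
    funext t
    simp [rStep, t.2, Fin.eta]
  · rw [rRec_of_le f h.le]
    exact rRec_mem_range c f (m + 1) h _
termination_by c + 1 - m
decreasing_by omega


-- general helper lemmas about real PSD matrices / entropy

lemma psd_smul {d : Type*} [Fintype d] {M : Matrix d d ℝ} (hM : M.PosSemidef) {c : ℝ}
    (hc : 0 ≤ c) : (c • M).PosSemidef := by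
  refine ⟨?_, fun x => ?_⟩
  · have := hM.1
    simp only [Matrix.IsHermitian, conjTranspose_smul, star_trivial] at this ⊢
    rw [this]
  · rw [show (x.sum fun i xi => x.sum fun j xj => star xi * (c • M) i j * xj)
        = c * (x.sum fun i xi => x.sum fun j xj => star xi * M i j * xj) by
      unfold Finsupp.sum
      rw [Finset.mul_sum]
      refine Finset.sum_congr rfl fun i _ => ?_
      rw [Finset.mul_sum]
      refine Finset.sum_congr rfl fun j _ => ?_
      simp only [Matrix.smul_apply, smul_eq_mul]
      ring]
    exact mul_nonneg hc (hM.2 x)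

lemma trace_eq_sum_eigs {d : Type*} [Fintype d] [DecidableEq d] {M : Matrix d d ℝ}
    (hM : M.IsHermitian) : M.trace = ∑ i, hM.eigenvalues i := by
  conv_lhs => rw [hM.spectral_theorem, Unitary.conjStarAlgAut_apply]
  rw [Matrix.trace_mul_cycle,
    Unitary.star_mul_self_of_mem (hM.eigenvectorUnitary).2, one_mul, trace_diagonal]
  simp [RCLike.ofReal_real_eq_id]

/-- Jensen-type bound: entropy of a nonneg sequence summing to 1 with at most K nonzero
terms is at most log K. -/
lemma sum_negMulLog_le {d : Type*} [Fintype d] (ev : d → ℝ) (h0 : ∀ i, 0 ≤ ev i)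
    (h1 : ∑ i, ev i = 1) (K : ℕ)
    (hK : Fintype.card {i // ev i ≠ 0} ≤ K) :
    ∑ i, Real.negMulLog (ev i) ≤ Real.log K := by
  classical
  set t : Finset d := Finset.univ.filter (fun i => ev i ≠ 0) with ht
  have htpos : ∀ i ∈ t, 0 < ev i := fun i hi =>
    lt_of_le_of_ne (h0 i) (Ne.symm ((Finset.mem_filter.mp hi).2))
  have hsum_t : ∑ i ∈ t, ev i = 1 := by
    rw [← h1]
    apply Finset.sum_subset (Finset.subset_univ t)
    intro i _ hi
    by_contra hne
    exact hi (Finset.mem_filter.mpr ⟨Finset.mem_univ i, hne⟩)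
  have hcardt : t.card ≤ K := by
    have : Fintype.card {i // ev i ≠ 0} = t.card := Fintype.card_subtype _
    omega
  have htne : 0 < t.card := by
    rcases Finset.eq_empty_or_nonempty t with h | h
    · rw [h, Finset.sum_empty] at hsum_t; norm_num at hsum_t
    · exact Finset.card_pos.mpr h
  have hstep : ∑ i, Real.negMulLog (ev i) = ∑ i ∈ t, ev i * Real.log (ev i)⁻¹ := by
    rw [← Finset.sum_subset (Finset.subset_univ t) (fun i _ hi => ?_)]
    · apply Finset.sum_congr rfl
      intro i _
      rw [Real.negMulLog, Real.log_inv]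
      ring
    · have : ev i = 0 := by
        by_contra hne
        exact hi (Finset.mem_filter.mpr ⟨Finset.mem_univ i, hne⟩)
      simp [this]
  rw [hstep]
  have hjensen : ∑ i ∈ t, ev i • Real.log ((ev i)⁻¹)
      ≤ Real.log (∑ i ∈ t, ev i • (ev i)⁻¹) := by
    apply (strictConcaveOn_log_Ioi.concaveOn).le_map_sum
      (fun i hi => (htpos i hi).le) hsum_t
    intro i hi
    exact Set.mem_Ioi.mpr (inv_pos.mpr (htpos i hi))
  simp only [smul_eq_mul] at hjensen
  have hsum_inv : ∑ i ∈ t, ev i * (ev i)⁻¹ = (t.card : ℝ) := by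
    rw [Finset.sum_congr rfl (fun i hi => mul_inv_cancel₀ (htpos i hi).ne')]
    simp
  rw [hsum_inv] at hjensen
  refine hjensen.trans (Real.log_le_log (by exact_mod_cast htne) ?_)
  exact_mod_cast hcardt

lemma vnEntropy_le_log_of_rank_le {d : Type*} [Fintype d] [DecidableEq d]
    {M : Matrix d d ℝ} (hM : M.PosSemidef) (htr : M.trace = 1) (K : ℕ)
    (hrank : M.rank ≤ K) : vnEntropy M ≤ Real.logb 2 (K : ℝ) := by
  have hH : M.IsHermitian := hM.1
  rw [vnEntropy, dif_pos hH]
  have h0 : ∀ i, 0 ≤ hH.eigenvalues i := fun i => hM.eigenvalues_nonneg i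
  have h1 : ∑ i, hH.eigenvalues i = 1 := by rw [← trace_eq_sum_eigs hH, htr]
  have hK : Fintype.card {i // hH.eigenvalues i ≠ 0} ≤ K := by
    rw [← hH.rank_eq_card_non_zero_eigs]; exact hrank
  have key := sum_negMulLog_le hH.eigenvalues h0 h1 K hK
  have hlog2 : (0 : ℝ) < Real.log 2 := Real.log_pos one_lt_two
  have heq : -∑ i, hH.eigenvalues i * Real.logb 2 (hH.eigenvalues i)
      = (∑ i, Real.negMulLog (hH.eigenvalues i)) / Real.log 2 := by
    rw [Finset.sum_div, ← Finset.sum_neg_distrib]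
    apply Finset.sum_congr rfl
    intro i _
    rw [Real.negMulLog, Real.logb]
    field_simp
  rw [heq, Real.logb]
  exact div_le_div_of_nonneg_right key hlog2.le -- try


/-- For the deterministic multi-cut recursion and any cut position
`m₀ ≤ c ≤ n`, the matrix `ρ = T Tᵀ / 2^n` built from the sign matrix
`T_{ij} = (-1)^{h(r(i ‖ j))}` is positive semidefinite with trace `1`, and its
von Neumann entropy is at most `log₂ |range f_c|`. -/
theorem statement4
    (n m₀ : ℕ) (hn : 1 ≤ n) (hm₀ : 1 ≤ m₀) (hm₀n : m₀ ≤ n)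
    (f : ∀ m : ℕ, (Fin m → Bool) → (Fin m → Bool))
    (c : ℕ) (hc1 : m₀ ≤ c) (hc2 : c ≤ n)
    (h : (Fin n → Bool) → Bool)
    (T : Matrix (Fin c → Bool) (Fin (n - c) → Bool) ℝ)
    (hT : ∀ i j, T i j = if h (rRec n f m₀ (concatAt c i j)) then (-1 : ℝ) else 1) :
    (((1 : ℝ) / 2 ^ n) • (T * Tᵀ)).PosSemidef ∧
      (((1 : ℝ) / 2 ^ n) • (T * Tᵀ)).trace = 1 ∧
      vnEntropy (((1 : ℝ) / 2 ^ n) • (T * Tᵀ))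
        ≤ Real.logb 2 ((Finset.univ.image (f c)).card : ℝ) := by
  classical
  have hTH : Tᵀ = Tᴴ := (conjTranspose_eq_transpose_of_trivial T).symm
  have hPSD0 : (T * Tᵀ).PosSemidef := by
    rw [hTH]; exact posSemidef_self_mul_conjTranspose T
  have hcpos : (0 : ℝ) ≤ 1 / 2 ^ n := by positivity
  have hPSD : (((1 : ℝ) / 2 ^ n) • (T * Tᵀ)).PosSemidef := psd_smul hPSD0 hcpos
  -- trace
  have htr : (((1 : ℝ) / 2 ^ n) • (T * Tᵀ)).trace = 1 := by
    rw [trace_smul, smul_eq_mul]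
    have hdiag : (T * Tᵀ).trace = (2 : ℝ) ^ n := by
      have hsq : ∀ i j, T i j * T i j = 1 := by
        intro i j; rw [hT]; split <;> norm_num
      rw [Matrix.trace]
      simp only [Matrix.diag_apply, Matrix.mul_apply, Matrix.transpose_apply]
      rw [Finset.sum_congr rfl fun i _ => Finset.sum_congr rfl fun j _ => hsq i j]
      simp only [Finset.sum_const, Finset.card_univ, nsmul_eq_mul, mul_one]
      rw [Fintype.card_fun, Fintype.card_fun]
      simp only [Fintype.card_bool, Fintype.card_fin]
      push_cast
      rw [← pow_add]
      congr 1
      omega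
    rw [hdiag]
    field_simp
  refine ⟨hPSD, htr, ?_⟩
  -- rank bound
  set K := Finset.univ.image (f c) with hK
  have hΦ : ∀ i : Fin c → Bool, ∃ y, rRec c f m₀ i = f c y :=
    fun i => rRec_mem_range c f m₀ hc1 i
  choose ψ hψ using hΦ
  have hmemK : ∀ i, f c (ψ i) ∈ K := fun i => Finset.mem_image_of_mem _ (Finset.mem_univ _)
  set S : Matrix {a // a ∈ K} (Fin (n - c) → Bool) ℝ :=
    fun a j => if h (rRec n f (c + 1) (concatAt c a.1 j)) then -1 else 1 with hS
  set A : Matrix (Fin c → Bool) {a // a ∈ K} ℝ :=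
    fun i a => if f c (ψ i) = a.1 then 1 else 0 with hA
  have hfact : T = A * S := by
    ext i j
    rw [Matrix.mul_apply, hT]
    have hrw : rRec n f m₀ (concatAt c i j) = rRec n f (c + 1) (concatAt c (f c (ψ i)) j) := by
      rw [rRec_concatAt c hc2 f m₀ (by omega) i j, hψ i]
    rw [hrw]
    rw [Finset.sum_eq_single (⟨f c (ψ i), hmemK i⟩ : {a // a ∈ K})]
    · simp [hA, hS]
    · intro b _ hb
      have : f c (ψ i) ≠ b.1 := by
        intro hcontra
        exact hb (Subtype.ext hcontra.symm)
      simp [hA, this]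
    · intro hcontra
      exact absurd (Finset.mem_univ _) hcontra
  have hrank : (((1 : ℝ) / 2 ^ n) • (T * Tᵀ)).rank ≤ K.card := by
    calc (((1 : ℝ) / 2 ^ n) • (T * Tᵀ)).rank
        ≤ (T * Tᵀ).rank := by
          rw [Matrix.smul_eq_diagonal_mul]
          exact Matrix.rank_mul_le_right _ _
      _ ≤ T.rank := Matrix.rank_mul_le_left _ _
      _ = (A * S).rank := by rw [hfact]
      _ ≤ A.rank := Matrix.rank_mul_le_left _ _
      _ ≤ Fintype.card {a // a ∈ K} := Matrix.rank_le_card_width A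
      _ = K.card := Fintype.card_coe K
  exact vnEntropy_le_log_of_rank_le hPSD htr K.card hrank
end
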